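/- arXiv:1411.5861 — 5 statements merged into one kernel-verified Lean document; each statement's English description precedes it below -/
import Mathlib

section
/- For any full-rank lattice Λ in ℝⁿ, any x > 0, and any vector u ∈ ℝⁿ with u ∉ Λ, the translated Gaussian sum satisfies ∑_{t ∈ Λ} exp(−x‖t + u‖²) < ∑_{t ∈ Λ} exp(−x‖t‖²). -/
open scoped BigOperators

/-- The full-rank lattice `{M ω : ω ∈ ℤⁿ}` generated by the columns of `M`. -/
def latticeSet {n : ℕ} (M : Matrix (Fin n) (Fin n) ℝ) : Set (Fin n → ℝ) :=
  {v | ∃ ω : Fin n → ℤ, v = M.mulVec (fun j => (ω j : ℝ))}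

/-- The psi function `ψ_Λ(x) = ∑_{t ∈ Λ} exp(−x‖t‖²)` of the lattice generated by `M`. -/
noncomputable def psi {n : ℕ} (M : Matrix (Fin n) (Fin n) ℝ) (x : ℝ) : ℝ :=
  ∑' ω : Fin n → ℤ, Real.exp (-x * ∑ i, (M.mulVec (fun j => (ω j : ℝ)) i) ^ 2)

namespace TGS
open Real

variable {n : ℕ}

noncomputable def Q (v : Fin n → ℝ) : ℝ := ∑ i, v i ^ 2

def cz (ω : Fin n → ℤ) : Fin n → ℝ := fun j => (ω j : ℝ)

lemma Q_nonneg (v : Fin n → ℝ) : 0 ≤ Q v :=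
  Finset.sum_nonneg fun i _ => sq_nonneg _

lemma Q_pos {v : Fin n → ℝ} (hv : v ≠ 0) : 0 < Q v := by
  rcases (Q_nonneg v).lt_or_eq with h | h
  · exact h
  · exfalso; apply hv
    funext i
    have := (Finset.sum_eq_zero_iff_of_nonneg (fun i _ => sq_nonneg (v i))).1 h.symm i
      (Finset.mem_univ i)
    simpa using sq_eq_zero_iff.mp this

lemma Q_double (w : Fin n → ℝ) : Q (w + w) = 4 * Q w := by
  unfold Q
  rw [Finset.mul_sum]
  exact Finset.sum_congr rfl fun i _ => by simp [Pi.add_apply]; ring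

lemma Q_lower (A B : Fin n → ℝ) : Q A / 2 - Q B ≤ Q (A + B) := by
  have h : ∀ i ∈ Finset.univ, A i ^ 2 / 2 - B i ^ 2 ≤ (A + B) i ^ 2 := by
    intro i _
    have := sq_nonneg (A i + 2 * B i)
    simp only [Pi.add_apply]
    nlinarith
  have := Finset.sum_le_sum h
  simpa [Q, Finset.sum_sub_distrib, Finset.sum_div] using this

lemma exp_pair (x : ℝ) (A B : Fin n → ℝ) :
    Real.exp (-x * Q A) * Real.exp (-x * Q B)
      = Real.exp (-(x/2) * Q (A + B)) * Real.exp (-(x/2) * Q (A - B)) := by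
  rw [← Real.exp_add, ← Real.exp_add]
  congr 1
  have h : Q (A + B) + Q (A - B) = 2 * Q A + 2 * Q B := by
    unfold Q
    rw [← Finset.sum_add_distrib, Finset.mul_sum, Finset.mul_sum, ← Finset.sum_add_distrib]
    exact Finset.sum_congr rfl fun i _ => by simp only [Pi.add_apply, Pi.sub_apply]; ring
  linear_combination (x/2) * h

lemma cz_add (a b : Fin n → ℤ) : cz (a + b) = cz a + cz b := by
  funext j; simp [cz]

lemma cz_sub (a b : Fin n → ℤ) : cz (a - b) = cz a - cz b := by
  funext j; simp [cz]

lemma cz_neg (a : Fin n → ℤ) : cz (-a) = -cz a := by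
  funext j; simp [cz]

lemma cz_zero : cz (0 : Fin n → ℤ) = 0 := by
  funext j; simp [cz]

variable (M : Matrix (Fin n) (Fin n) ℝ)

noncomputable def L (ω : Fin n → ℤ) : Fin n → ℝ := M.mulVec (cz ω)

lemma L_add (a b : Fin n → ℤ) : L M (a + b) = L M a + L M b := by
  unfold L; rw [cz_add, Matrix.mulVec_add]

lemma L_sub (a b : Fin n → ℤ) : L M (a - b) = L M a - L M b := by
  unfold L; rw [cz_sub, Matrix.mulVec_sub]

lemma L_neg (a : Fin n → ℤ) : L M (-a) = -L M a := by
  unfold L; rw [cz_neg, Matrix.mulVec_neg]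

lemma L_zero : L M (0 : Fin n → ℤ) = 0 := by
  unfold L; rw [cz_zero, Matrix.mulVec_zero]

noncomputable def f (x : ℝ) (v : Fin n → ℝ) : ℝ :=
  ∑' ω : Fin n → ℤ, Real.exp (-x * Q (L M ω + v))

/-- Frobenius-type bound `Q (N v) ≤ (∑∑ N²) Q v`. -/
lemma QN_bound (N : Matrix (Fin n) (Fin n) ℝ) (z : Fin n → ℝ) :
    Q (N.mulVec z) ≤ (∑ i, ∑ j, N i j ^ 2) * Q z := by
  unfold Q
  rw [Finset.sum_mul]
  apply Finset.sum_le_sum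
  intro i _
  have h := Finset.sum_mul_sq_le_sq_mul_sq Finset.univ (fun j => N i j) z
  simpa [Matrix.mulVec, dotProduct] using h

lemma exists_K (hM : M.det ≠ 0) :
    ∃ K : ℝ, 0 < K ∧ ∀ z : Fin n → ℝ, Q z ≤ K * Q (M.mulVec z) := by
  set N := M⁻¹ with hN
  refine ⟨(∑ i, ∑ j, N i j ^ 2) + 1, by positivity, fun z => ?_⟩
  have hz : N.mulVec (M.mulVec z) = z := by
    rw [Matrix.mulVec_mulVec, Matrix.nonsing_inv_mul M (isUnit_iff_ne_zero.mpr hM),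
      Matrix.one_mulVec]
  calc Q z = Q (N.mulVec (M.mulVec z)) := by rw [hz]
    _ ≤ (∑ i, ∑ j, N i j ^ 2) * Q (M.mulVec z) := QN_bound N _
    _ ≤ ((∑ i, ∑ j, N i j ^ 2) + 1) * Q (M.mulVec z) := by
        have := Q_nonneg (M.mulVec z); nlinarith


/-! ### Summability -/

lemma summable_exp_int {a : ℝ} (ha : 0 < a) :
    Summable (fun m : ℤ => Real.exp (-a * (m : ℝ) ^ 2)) := by
  have hr0 : (0:ℝ) ≤ Real.exp (-a) := (Real.exp_pos _).le
  have hr1 : Real.exp (-a) < 1 := Real.exp_lt_one_iff.mpr (by linarith)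
  have hgeo : Summable (fun k : ℕ => Real.exp (-a) ^ k) :=
    summable_geometric_of_lt_one hr0 hr1
  have hle : ∀ m : ℤ, Real.exp (-a * (m:ℝ)^2) ≤ Real.exp (-a) ^ m.natAbs := by
    intro m
    rw [← Real.exp_nat_mul]
    apply Real.exp_le_exp.mpr
    have h1 : (m.natAbs : ℝ) ≤ (m:ℝ)^2 := by
      have h0 : m.natAbs ≤ m.natAbs ^ 2 := Nat.le_self_pow two_ne_zero _
      calc (m.natAbs:ℝ) ≤ ((m.natAbs:ℝ))^2 := by exact_mod_cast h0
        _ = (m:ℝ)^2 := by rw [Nat.cast_natAbs, Int.cast_abs, sq_abs]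
    nlinarith
  apply Summable.of_nonneg_of_le (fun m => (Real.exp_pos _).le) hle
  apply Summable.of_nat_of_neg <;> simpa using hgeo

lemma summable_prod_exp : ∀ (m : ℕ) (a : ℝ), 0 < a →
    Summable (fun ω : Fin m → ℤ => ∏ i, Real.exp (-a * ((ω i : ℝ)) ^ 2)) := by
  intro m
  induction m with
  | zero =>
      intro a _
      exact (hasSum_fintype _).summable
  | succ m ih =>
      intro a ha
      have h1 : Summable (fun p : ℤ × (Fin m → ℤ) =>
          Real.exp (-a * ((p.1 : ℝ))^2) * ∏ i, Real.exp (-a * ((p.2 i : ℝ))^2)) := by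
        apply Summable.mul_of_nonneg (summable_exp_int ha) (ih a ha)
        · intro z; exact (Real.exp_pos _).le
        · intro ω; exact Finset.prod_nonneg fun _ _ => (Real.exp_pos _).le
      rw [← Equiv.summable_iff (Fin.consEquiv (fun _ => ℤ))]
      apply h1.congr
      intro p
      simp [Fin.prod_univ_succ]

lemma summable_base {m : ℕ} {a : ℝ} (ha : 0 < a) :
    Summable (fun ω : Fin m → ℤ => Real.exp (-a * ∑ i, ((ω i : ℝ)) ^ 2)) := by
  have h := summable_prod_exp m a ha
  apply h.congr
  intro ω
  rw [← Real.exp_sum]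
  congr 1
  rw [Finset.mul_sum]

variable {M}

lemma Q_L_lower (hM : M.det ≠ 0) :
    ∃ K : ℝ, 0 < K ∧ ∀ (ω : Fin n → ℤ) (v : Fin n → ℝ),
      (∑ i, ((ω i : ℝ))^2) / (2*K) - Q v ≤ Q (L M ω + v) := by
  obtain ⟨K, hK, hKle⟩ := exists_K M hM
  refine ⟨K, hK, fun ω v => ?_⟩
  have h1 : Q (L M ω) / 2 - Q v ≤ Q (L M ω + v) := Q_lower _ _
  have h2 : Q (cz ω) ≤ K * Q (L M ω) := hKle (cz ω)
  have h3 : Q (cz ω) = ∑ i, ((ω i : ℝ))^2 := by unfold Q cz; rfl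
  rw [h3] at h2
  have : (∑ i, ((ω i : ℝ))^2) / (2*K) ≤ Q (L M ω) / 2 := by
    rw [div_le_div_iff₀ (by positivity) (by norm_num)]
    nlinarith
  linarith

lemma summable_term (hM : M.det ≠ 0) {x : ℝ} (hx : 0 < x) (v : Fin n → ℝ) :
    Summable (fun ω : Fin n → ℤ => Real.exp (-x * Q (L M ω + v))) := by
  obtain ⟨K, hK, hKle⟩ := Q_L_lower hM
  have hb : Summable (fun ω : Fin n → ℤ =>
      Real.exp (x * Q v) * Real.exp (-(x/(2*K)) * ∑ i, ((ω i : ℝ))^2)) :=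
    (summable_base (by positivity)).mul_left _
  apply Summable.of_nonneg_of_le (fun _ => (Real.exp_pos _).le) _ hb
  intro ω
  rw [← Real.exp_add]
  apply Real.exp_le_exp.mpr
  have h4 := mul_le_mul_of_nonneg_left (hKle ω v) hx.le
  have h5 : x * ((∑ i, ((ω i : ℝ))^2)/(2*K) - Q v)
      = (x/(2*K)) * (∑ i, ((ω i : ℝ))^2) - x * Q v := by ring
  linarith

lemma f_pos (hM : M.det ≠ 0) {x : ℝ} (hx : 0 < x) (v : Fin n → ℝ) : 0 < f M x v :=
  Summable.tsum_pos (summable_term hM hx v) (fun _ => (Real.exp_pos _).le) 0 (Real.exp_pos _)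

lemma one_le_f_zero (hM : M.det ≠ 0) {x : ℝ} (hx : 0 < x) : 1 ≤ f M x 0 := by
  have h := Summable.le_tsum (summable_term hM hx 0) 0 (fun _ _ => (Real.exp_pos _).le)
  calc (1:ℝ) = Real.exp (-x * Q (L M 0 + 0)) := by simp [L_zero, Q]
    _ ≤ f M x 0 := h

lemma f_nonneg (v : Fin n → ℝ) (x : ℝ) : 0 ≤ f M x v :=
  tsum_nonneg fun _ => (Real.exp_pos _).le

lemma f_shift {x : ℝ} (v : Fin n → ℝ) (ρ : Fin n → ℤ) :
    f M x (v + L M ρ) = f M x v := by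
  unfold f
  rw [← Equiv.tsum_eq (Equiv.addRight ρ) (fun ω => Real.exp (-x * Q (L M ω + v)))]
  apply tsum_congr
  intro ω
  congr 2
  rw [Equiv.coe_addRight, L_add]
  abel

lemma f_bdd (hM : M.det ≠ 0) {x : ℝ} (hx : 0 < x) :
    ∃ C : ℝ, ∀ v : Fin n → ℝ, f M x v ≤ C := by
  obtain ⟨K, hK, hKle⟩ := Q_L_lower hM
  set F : ℝ := ∑ i, ∑ j, M i j ^ 2 with hF
  set B : ℝ := F * (n / 4) + 1 with hB
  have hB0 : 0 ≤ B := by positivity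
  refine ⟨Real.exp (x * B) * ∑' ω : Fin n → ℤ,
    Real.exp (-(x/(2*K)) * ∑ i, ((ω i : ℝ))^2), fun v => ?_⟩
  -- reduce v into a fundamental box
  set w : Fin n → ℝ := M⁻¹.mulVec v with hw
  set ρ : Fin n → ℤ := fun j => round (w j) with hρ
  set v' : Fin n → ℝ := v - L M ρ with hv'
  have hvv : v' + L M ρ = v := by rw [hv']; abel
  have hQv' : Q v' ≤ B := by
    have hMv : M.mulVec w = v := by
      rw [hw, Matrix.mulVec_mulVec, Matrix.mul_nonsing_inv M (isUnit_iff_ne_zero.mpr hM),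
        Matrix.one_mulVec]
    have hv'2 : v' = M.mulVec (w - cz ρ) := by
      rw [Matrix.mulVec_sub, hMv, hv']; rfl
    rw [hv'2]
    calc Q (M.mulVec (w - cz ρ)) ≤ F * Q (w - cz ρ) := QN_bound M _
      _ ≤ F * (n / 4) := by
          apply mul_le_mul_of_nonneg_left _ (by positivity)
          have : ∀ i ∈ Finset.univ, ((w - cz ρ) i)^2 ≤ (1/4 : ℝ) := by
            intro i _
            have h := abs_sub_round (w i)
            have : |(w - cz ρ) i| ≤ 1/2 := by
              simpa [Pi.sub_apply, cz, hρ] using h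
            nlinarith [abs_nonneg ((w - cz ρ) i), sq_abs ((w - cz ρ) i)]
          calc Q (w - cz ρ) ≤ ∑ _i : Fin n, (1/4 : ℝ) := Finset.sum_le_sum this
            _ = n / 4 := by simp; ring
      _ ≤ B := by
          have h0 : (0:ℝ) ≤ F * ((n:ℝ)/4) := by positivity
          rw [hB]; linarith
  have hred : f M x v = f M x v' := by rw [← hvv, f_shift]
  rw [hred]
  unfold f
  rw [← tsum_mul_left]
  apply Summable.tsum_le_tsum _ (summable_term hM hx v')
    (((summable_base (by positivity)).mul_left _))
  intro ω
  rw [← Real.exp_add]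
  apply Real.exp_le_exp.mpr
  have h4 := mul_le_mul_of_nonneg_left (hKle ω v') hx.le
  have h5 : x * ((∑ i, ((ω i : ℝ))^2)/(2*K) - Q v')
      = (x/(2*K)) * (∑ i, ((ω i : ℝ))^2) - x * Q v' := by ring
  have h6 := mul_le_mul_of_nonneg_left hQv' hx.le
  clear_value F B w ρ v'
  nlinarith [h4, h5, h6]



/-! ### The parity pairing -/

def bI (b : Bool) : ℤ := if b then 1 else 0

def iota (r : Fin n → Bool) : Fin n → ℤ := fun j => bI (r j)

def pr (z : ℤ) : Bool := decide (z % 2 = 1)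

lemma bI_pr (z : ℤ) : 2 * ((z - bI (pr z)) / 2) + bI (pr z) = z := by
  unfold pr bI
  rcases Int.emod_two_eq_zero_or_one z with h | h <;> simp [h] <;> omega

lemma pr_add (τ : ℤ) (b : Bool) : pr (2 * τ + bI b) = b := by
  cases b <;> simp [pr, bI] <;> omega

lemma div_part (τ : ℤ) (b : Bool) : (2 * τ + bI b - bI b) / 2 = τ := by
  cases b <;> simp [bI] <;> omega

def pairEquiv (n : ℕ) :
    ((Fin n → Bool) × ((Fin n → ℤ) × (Fin n → ℤ))) ≃ ((Fin n → ℤ) × (Fin n → ℤ)) where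
  toFun q := (q.2.1 + q.2.2 + iota q.1, q.2.1 - q.2.2)
  invFun p := (fun j => pr (p.1 j - p.2 j),
    (fun j => p.2 j + (p.1 j - p.2 j - bI (pr (p.1 j - p.2 j))) / 2,
     fun j => (p.1 j - p.2 j - bI (pr (p.1 j - p.2 j))) / 2))
  left_inv := by
    rintro ⟨r, σ, τ⟩
    have key : ∀ j, (σ + τ + iota r) j - (σ - τ) j = 2 * τ j + bI (r j) := by
      intro j; simp only [Pi.add_apply, Pi.sub_apply, iota]; ring
    simp only [Prod.mk.injEq]
    refine ⟨funext fun j => ?_, funext fun j => ?_, funext fun j => ?_⟩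
    · rw [key j]; exact pr_add (τ j) (r j)
    · rw [key j, pr_add, div_part]; simp
    · rw [key j, pr_add, div_part]
  right_inv := by
    rintro ⟨s, t⟩
    simp only [Prod.mk.injEq]
    constructor
    · funext j
      simp only [Pi.add_apply, Pi.sub_apply, iota]
      have h := bI_pr (s j - t j)
      omega
    · funext j
      simp only [Pi.add_apply, Pi.sub_apply]
      omega

/-! ### The coset sums `Ar` -/

variable (M) in
noncomputable def Ar (x : ℝ) (γ : Fin n → ℝ) (r : Fin n → Bool) : ℝ :=
  ∑' σ : Fin n → ℤ, Real.exp (-(x/2) * Q (L M (σ + σ + iota r) + γ))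

lemma double_inj (r : Fin n → Bool) :
    Function.Injective (fun σ : Fin n → ℤ => σ + σ + iota r) := by
  intro a b h
  funext j
  have := congrFun h j
  simp only [Pi.add_apply] at this
  omega

lemma summable_Ar (hM : M.det ≠ 0) {x : ℝ} (hx : 0 < x) (γ : Fin n → ℝ) (r : Fin n → Bool) :
    Summable (fun σ : Fin n → ℤ => Real.exp (-(x/2) * Q (L M (σ + σ + iota r) + γ))) :=
  (summable_term hM (by linarith : (0:ℝ) < x/2) γ).comp_injective (double_inj r)

lemma norm_summable_Ar (hM : M.det ≠ 0) {x : ℝ} (hx : 0 < x) (γ : Fin n → ℝ) (r : Fin n → Bool) :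
    Summable (fun σ : Fin n → ℤ => ‖Real.exp (-(x/2) * Q (L M (σ + σ + iota r) + γ))‖) := by
  simpa [Real.norm_eq_abs, abs_of_pos (Real.exp_pos _)] using summable_Ar hM hx γ r

set_option maxHeartbeats 2000000 in
lemma f_mul (hM : M.det ≠ 0) {x : ℝ} (hx : 0 < x) (a b : Fin n → ℝ) :
    f M x a * f M x b = ∑ r : Fin n → Bool, Ar M x (a + b) r * Ar M x (a - b) r := by
  have hx2 : (0:ℝ) < x/2 := by linarith
  have hsa := summable_term hM hx a
  have hsb := summable_term hM hx b
  have hna : Summable (fun ω : Fin n → ℤ => ‖Real.exp (-x * Q (L M ω + a))‖) := by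
    simpa [Real.norm_eq_abs, abs_of_pos (Real.exp_pos _)] using hsa
  have hnb : Summable (fun ω : Fin n → ℤ => ‖Real.exp (-x * Q (L M ω + b))‖) := by
    simpa [Real.norm_eq_abs, abs_of_pos (Real.exp_pos _)] using hsb
  have hpt : ∀ q : (Fin n → Bool) × ((Fin n → ℤ) × (Fin n → ℤ)),
      Real.exp (-x * Q (L M ((pairEquiv n) q).1 + a))
        * Real.exp (-x * Q (L M ((pairEquiv n) q).2 + b))
      = Real.exp (-(x/2) * Q (L M (q.2.1 + q.2.1 + iota q.1) + (a + b)))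
        * Real.exp (-(x/2) * Q (L M (q.2.2 + q.2.2 + iota q.1) + (a - b))) := by
    rintro ⟨r, σ, τ⟩
    simp only [pairEquiv, Equiv.coe_fn_mk]
    rw [exp_pair]
    have e1 : L M (σ + τ + iota r) + a + (L M (σ - τ) + b)
        = L M (σ + σ + iota r) + (a + b) := by
      rw [L_add, L_add, L_sub, L_add, L_add]
      abel
    have e2 : L M (σ + τ + iota r) + a - (L M (σ - τ) + b)
        = L M (τ + τ + iota r) + (a - b) := by
      rw [L_add, L_add, L_sub, L_add, L_add]
      abel
    rw [e1, e2]
  have hprod : Summable (fun z : (Fin n → ℤ) × (Fin n → ℤ) =>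
      Real.exp (-x * Q (L M z.1 + a)) * Real.exp (-x * Q (L M z.2 + b))) :=
    summable_mul_of_summable_norm hna hnb
  have hsum2 : Summable (fun q : (Fin n → Bool) × ((Fin n → ℤ) × (Fin n → ℤ)) =>
      Real.exp (-(x/2) * Q (L M (q.2.1 + q.2.1 + iota q.1) + (a + b)))
        * Real.exp (-(x/2) * Q (L M (q.2.2 + q.2.2 + iota q.1) + (a - b)))) := by
    have h := ((pairEquiv n).summable_iff (f := fun z : (Fin n → ℤ) × (Fin n → ℤ) =>
      Real.exp (-x * Q (L M z.1 + a)) * Real.exp (-x * Q (L M z.2 + b)))).mpr hprod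
    exact h.congr hpt
  calc f M x a * f M x b
      = ∑' z : (Fin n → ℤ) × (Fin n → ℤ),
          Real.exp (-x * Q (L M z.1 + a)) * Real.exp (-x * Q (L M z.2 + b)) :=
        tsum_mul_tsum_of_summable_norm hna hnb
    _ = ∑' q : (Fin n → Bool) × ((Fin n → ℤ) × (Fin n → ℤ)),
          Real.exp (-(x/2) * Q (L M (q.2.1 + q.2.1 + iota q.1) + (a + b)))
            * Real.exp (-(x/2) * Q (L M (q.2.2 + q.2.2 + iota q.1) + (a - b))) := by
        rw [← Equiv.tsum_eq (pairEquiv n) (fun z : (Fin n → ℤ) × (Fin n → ℤ) =>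
          Real.exp (-x * Q (L M z.1 + a)) * Real.exp (-x * Q (L M z.2 + b)))]
        exact tsum_congr hpt
    _ = ∑ r : Fin n → Bool, Ar M x (a + b) r * Ar M x (a - b) r := by
        rw [Summable.tsum_prod' hsum2 (fun r => summable_mul_of_summable_norm
          (norm_summable_Ar hM hx (a+b) r) (norm_summable_Ar hM hx (a-b) r)), tsum_fintype]
        exact Finset.sum_congr rfl fun r _ =>
          (tsum_mul_tsum_of_summable_norm (norm_summable_Ar hM hx (a+b) r)
            (norm_summable_Ar hM hx (a-b) r)).symm


/-! ### The square identity and the weak inequality -/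

set_option maxHeartbeats 1000000 in
lemma sq_identity (hM : M.det ≠ 0) {x : ℝ} (hx : 0 < x) (v : Fin n → ℝ) :
    ∑ r : Fin n → Bool, (Ar M x 0 r - Ar M x (v + v) r)^2
      = f M x 0 * f M x 0 - 2 * (f M x v * f M x v) + f M x (v + v) * f M x 0 := by
  have h1 := f_mul hM hx (0 : Fin n → ℝ) 0
  have h2 := f_mul hM hx v v
  have h3 := f_mul hM hx (v + v) 0
  simp only [add_zero, sub_zero, sub_self] at h1 h2 h3
  rw [h1, h2, h3, Finset.mul_sum, ← Finset.sum_sub_distrib, ← Finset.sum_add_distrib]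
  exact Finset.sum_congr rfl fun r _ => by ring

lemma key_ineq (hM : M.det ≠ 0) {x : ℝ} (hx : 0 < x) (v : Fin n → ℝ) :
    2 * (f M x v * f M x v) ≤ f M x 0 * f M x 0 + f M x (v + v) * f M x 0 := by
  have h := sq_identity hM hx v
  have hnn : 0 ≤ ∑ r : Fin n → Bool, (Ar M x 0 r - Ar M x (v + v) r)^2 :=
    Finset.sum_nonneg fun r _ => sq_nonneg _
  linarith

lemma f_le_f_zero (hM : M.det ≠ 0) {x : ℝ} (hx : 0 < x) (v : Fin n → ℝ) :
    f M x v ≤ f M x 0 := by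
  obtain ⟨C, hC⟩ := f_bdd hM hx
  have hne : (Set.range (f M x)).Nonempty := ⟨f M x 0, 0, rfl⟩
  have hbdd : BddAbove (Set.range (f M x)) := ⟨C, by rintro y ⟨w, rfl⟩; exact hC w⟩
  set S := sSup (Set.range (f M x)) with hS
  have hle : ∀ w, f M x w ≤ S := fun w => le_csSup hbdd ⟨w, rfl⟩
  have h0 : f M x 0 ≤ S := hle 0
  have hf0 : 0 < f M x 0 := f_pos hM hx 0
  have hA : 0 ≤ (f M x 0 * f M x 0 + f M x 0 * S)/2 := by nlinarith
  have hsq : ∀ w, f M x w ≤ Real.sqrt ((f M x 0 * f M x 0 + f M x 0 * S)/2) := by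
    intro w
    have hk := key_ineq hM hx w
    have hw2 : f M x (w + w) ≤ S := hle (w + w)
    have h2 : (f M x w)^2 ≤ (f M x 0 * f M x 0 + f M x 0 * S)/2 := by nlinarith
    calc f M x w = Real.sqrt ((f M x w)^2) := (Real.sqrt_sq (f_nonneg w x)).symm
      _ ≤ Real.sqrt ((f M x 0 * f M x 0 + f M x 0 * S)/2) := Real.sqrt_le_sqrt h2
  have hSle : S ≤ Real.sqrt ((f M x 0 * f M x 0 + f M x 0 * S)/2) :=
    csSup_le hne (by rintro y ⟨w, rfl⟩; exact hsq w)
  clear_value S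
  have hS2 : S^2 ≤ (f M x 0 * f M x 0 + f M x 0 * S)/2 := by
    have hS0 : (0:ℝ) ≤ S := le_trans hf0.le h0
    nlinarith [Real.sq_sqrt hA, Real.sqrt_nonneg ((f M x 0 * f M x 0 + f M x 0 * S)/2)]
  have hfin : S ≤ f M x 0 := by nlinarith
  exact le_trans (hle v) hfin

/-! ### Evaluation of `Ar` at the zero parity class -/

lemma Ar_r0 (x : ℝ) (v : Fin n → ℝ) :
    Ar M x (v + v) (fun _ => false) = f M (2*x) v := by
  unfold Ar f
  apply tsum_congr
  intro σ
  have h1 : σ + σ + iota (fun _ : Fin n => false) = σ + σ := by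
    funext j; simp [iota, bI]
  rw [h1, L_add]
  have h2 : L M σ + L M σ + (v + v) = (L M σ + v) + (L M σ + v) := by abel
  rw [h2, Q_double]
  congr 1
  ring

lemma Ar_r0_zero (x : ℝ) :
    Ar M x 0 (fun _ => false) = f M (2*x) 0 := by
  have h := Ar_r0 (M := M) x 0
  simpa using h

/-! ### Equality propagation -/

lemma eq_step (hM : M.det ≠ 0) {x : ℝ} (hx : 0 < x) {u : Fin n → ℝ}
    (hu : f M x u = f M x 0) : f M (2*x) u = f M (2*x) 0 := by
  have hid := sq_identity hM hx u
  have hw := f_le_f_zero hM hx (u + u)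
  have hf0 := f_pos hM hx 0
  have hle0 : ∑ r : Fin n → Bool, (Ar M x 0 r - Ar M x (u + u) r)^2 ≤ 0 := by
    rw [hid, hu]; nlinarith
  have hz : ∀ r ∈ (Finset.univ : Finset (Fin n → Bool)),
      (Ar M x 0 r - Ar M x (u + u) r)^2 = 0 := by
    intro r hr
    exact (Finset.sum_eq_zero_iff_of_nonneg (fun r _ => sq_nonneg _)).mp
      (le_antisymm hle0 (Finset.sum_nonneg fun r _ => sq_nonneg _)) r hr
  have h0 := hz (fun _ => false) (Finset.mem_univ _)
  have heq : Ar M x 0 (fun _ => false) = Ar M x (u + u) (fun _ => false) :=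
    sub_eq_zero.mp (pow_eq_zero_iff two_ne_zero |>.mp h0)
  rw [Ar_r0_zero, Ar_r0] at heq
  exact heq.symm

lemma eq_iter (hM : M.det ≠ 0) {x : ℝ} (hx : 0 < x) {u : Fin n → ℝ}
    (heq : f M x u = f M x 0) :
    ∀ k : ℕ, f M (2^k * x) u = f M (2^k * x) 0 := by
  intro k
  induction k with
  | zero => simpa using heq
  | succ k ih =>
      have hpos : (0:ℝ) < 2^k * x := by positivity
      have h2 := eq_step hM hpos ih
      have hcast : (2:ℝ) * (2^k * x) = 2^(k+1) * x := by ring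
      rwa [hcast] at h2

/-! ### Positive distance to the lattice -/

lemma exists_delta (hM : M.det ≠ 0) {u : Fin n → ℝ}
    (hu : ∀ ω : Fin n → ℤ, L M ω + u ≠ 0) :
    ∃ δ : ℝ, 0 < δ ∧ ∀ ω : Fin n → ℤ, δ ≤ Q (L M ω + u) := by
  obtain ⟨K, hK, hKle⟩ := Q_L_lower hM
  obtain ⟨T, hT⟩ := exists_nat_ge (2*K*(Q u + 1))
  set box : Finset (Fin n → ℤ) :=
    Finset.Icc (fun _ => -(T:ℤ)) (fun _ => (T:ℤ)) with hbox
  have h0mem : (0 : Fin n → ℤ) ∈ box := by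
    rw [hbox, Finset.mem_Icc]
    constructor <;> intro j <;> simp
  obtain ⟨ω₀, hω₀, hmin⟩ := Finset.exists_min_image box
    (fun ω => Q (L M ω + u)) ⟨0, h0mem⟩
  have hδ₀ : 0 < Q (L M ω₀ + u) := Q_pos (hu ω₀)
  refine ⟨min 1 (Q (L M ω₀ + u)), lt_min one_pos hδ₀, fun ω => ?_⟩
  by_cases hmem : ω ∈ box
  · exact le_trans (min_le_right _ _) (hmin ω hmem)
  · -- outside the box, the value is at least 1
    refine le_trans (min_le_left _ _) ?_
    rw [hbox, Finset.mem_Icc, not_and_or] at hmem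
    have hj : ∃ j, (T:ℤ) + 1 ≤ |ω j| := by
      rcases hmem with h | h
      · rw [Pi.le_def, not_forall] at h
        obtain ⟨j, hj⟩ := h
        exact ⟨j, by
          simp at hj
          rcases abs_cases (ω j) with ⟨h1, h2⟩ | ⟨h1, h2⟩ <;> omega⟩
      · rw [Pi.le_def, not_forall] at h
        obtain ⟨j, hj⟩ := h
        exact ⟨j, by
          simp at hj
          rcases abs_cases (ω j) with ⟨h1, h2⟩ | ⟨h1, h2⟩ <;> omega⟩
    obtain ⟨j, hj⟩ := hj
    have hsq : ((T:ℝ)) ≤ ((ω j : ℝ))^2 := by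
      have h1 : ((T:ℤ) + 1)^2 ≤ (ω j)^2 := by nlinarith [abs_nonneg (ω j), sq_abs (ω j)]
      have h2 : ((T:ℤ)) ≤ ((T:ℤ)+1)^2 := by nlinarith [Int.natCast_nonneg T]
      have := le_trans h2 h1
      exact_mod_cast this
    have hsum : ((T:ℝ)) ≤ ∑ i, ((ω i : ℝ))^2 := by
      refine le_trans hsq ?_
      exact Finset.single_le_sum (fun i _ => sq_nonneg ((ω i : ℝ))) (Finset.mem_univ j)
    have hQ := hKle ω u
    have hdiv : (2*K*(Q u + 1)) / (2*K) ≤ (∑ i, ((ω i : ℝ))^2) / (2*K) := by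
      apply div_le_div_of_nonneg_right ?_ (by positivity)
      · exact le_trans hT hsum
    have hsimp : (2*K*(Q u + 1)) / (2*K) = Q u + 1 := by field_simp
    rw [hsimp] at hdiv
    linarith

/-! ### Gaussian decay in the parameter -/

lemma f_decay (hM : M.det ≠ 0) {x y δ : ℝ} (hx : 0 < x) (hxy : x ≤ y)
    {u : Fin n → ℝ} (hδ : ∀ ω : Fin n → ℤ, δ ≤ Q (L M ω + u)) :
    f M y u ≤ Real.exp (-((y - x) * δ)) * f M x u := by
  unfold f
  rw [← tsum_mul_left]
  apply Summable.tsum_le_tsum _ (summable_term hM (lt_of_lt_of_le hx hxy) u)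
    ((summable_term hM hx u).mul_left _)
  intro ω
  rw [← Real.exp_add]
  apply Real.exp_le_exp.mpr
  have h1 := mul_le_mul_of_nonneg_left (hδ ω) (sub_nonneg.mpr hxy)
  nlinarith [h1]

end TGS

theorem translated_gaussian_sum_lt {n : ℕ} (M : Matrix (Fin n) (Fin n) ℝ)
    (hM : M.det ≠ 0) (x : ℝ) (hx : 0 < x) (u : Fin n → ℝ) (hu : u ∉ latticeSet M) :
    (∑' ω : Fin n → ℤ,
        Real.exp (-x * ∑ i, (M.mulVec (fun j => (ω j : ℝ)) i + u i) ^ 2)) < psi M x := by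
  by_contra hcon
  rw [not_lt] at hcon
  have hlhs : (∑' ω : Fin n → ℤ,
      Real.exp (-x * ∑ i, (M.mulVec (fun j => (ω j : ℝ)) i + u i) ^ 2)) = TGS.f M x u := rfl
  have hpsi : psi M x = TGS.f M x 0 := by
    unfold psi TGS.f
    apply tsum_congr
    intro ω
    exact congrArg (fun t => Real.exp (-x * t)) (by simp [TGS.Q, TGS.L]; rfl)
  have hne : ∀ ω : Fin n → ℤ, TGS.L M ω + u ≠ 0 := by
    intro ω h
    apply hu
    refine ⟨-ω, ?_⟩
    have : u = -(TGS.L M ω) := eq_neg_of_add_eq_zero_right h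
    rw [this, ← TGS.L_neg]
    rfl
  rw [hlhs, hpsi] at hcon
  have heq : TGS.f M x u = TGS.f M x 0 :=
    le_antisymm (TGS.f_le_f_zero hM hx u) hcon
  obtain ⟨δ, hδ0, hδ⟩ := TGS.exists_delta hM hne
  have hiter := TGS.eq_iter hM hx heq
  obtain ⟨k, hk⟩ := exists_nat_ge (TGS.f M x u / (x * δ))
  have hpow : (k:ℝ) + 1 ≤ (2:ℝ)^k := by
    have := Nat.lt_two_pow_self (n := k)
    exact_mod_cast this
  have hy : x ≤ 2^k * x := by nlinarith
  have hypos : (0:ℝ) < 2^k * x := by positivity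
  have hdec := TGS.f_decay hM hx hy hδ
  have hfu : 0 < TGS.f M x u := TGS.f_pos hM hx u
  have h1 : TGS.f M x u ≤ (2^k * x - x) * δ := by
    have hk' : TGS.f M x u ≤ (k:ℝ) * (x * δ) := by
      rw [div_le_iff₀ (by positivity)] at hk
      linarith
    have hstep : (k:ℝ) * x ≤ ((2:ℝ)^k - 1) * x :=
      mul_le_mul_of_nonneg_right (by linarith) hx.le
    have hstep2 : (k:ℝ) * x * δ ≤ ((2:ℝ)^k - 1) * x * δ :=
      mul_le_mul_of_nonneg_right hstep hδ0.le
    have h5 : (k:ℝ) * (x * δ) = (k:ℝ) * x * δ := by ring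
    have h6 : ((2:ℝ)^k - 1) * x * δ = (2^k * x - x) * δ := by ring
    linarith
  have hsmall : Real.exp (-((2^k * x - x) * δ)) * TGS.f M x u < 1 := by
    have h3 : Real.exp (-((2^k * x - x) * δ)) * TGS.f M x u
        = TGS.f M x u / Real.exp ((2^k * x - x) * δ) := by
      rw [Real.exp_neg]; ring
    rw [h3, div_lt_one (Real.exp_pos _)]
    have h4 := Real.add_one_le_exp ((2^k * x - x) * δ)
    linarith
  have hlt : TGS.f M (2^k * x) u < 1 := lt_of_le_of_lt hdec hsmall
  rw [hiter k] at hlt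
  have hge := TGS.one_le_f_zero hM hypos
  linarith
end

section
/- For any full-rank lattice Λ in ℝⁿ, any x > 0, and any u ∈ ℝⁿ, the translated Gaussian sum satisfies ∑_{t ∈ Λ} exp(−x‖t + u‖²) ≤ ∑_{t ∈ Λ} exp(−x‖t‖²), with equality if and only if u ∈ Λ. -/
open scoped BigOperators

set_option maxHeartbeats 1600000

namespace GaussLatticeAux

open Topology Filter

variable {n : ℕ} {M : Matrix (Fin n) (Fin n) ℝ} {x : ℝ}

def iz (ω : Fin n → ℤ) : Fin n → ℝ := fun j => (ω j : ℝ)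

noncomputable def gterm (M : Matrix (Fin n) (Fin n) ℝ) (x : ℝ) (u : Fin n → ℝ)
    (ω : Fin n → ℤ) : ℝ :=
  Real.exp (-x * ∑ i, (M.mulVec (iz ω) i + u i) ^ 2)

noncomputable def Th (M : Matrix (Fin n) (Fin n) ℝ) (x : ℝ) (u : Fin n → ℝ) : ℝ :=
  ∑' ω : Fin n → ℤ, gterm M x u ω

def bb (ε : Fin n → Bool) : Fin n → ℝ := fun j => if ε j then 1 else 0

lemma gterm_pos (M : Matrix (Fin n) (Fin n) ℝ) (x : ℝ) (u : Fin n → ℝ) (ω : Fin n → ℤ) :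
    0 < gterm M x u ω := Real.exp_pos _

lemma summable_exp_neg_int_sq {c : ℝ} (hc : 0 < c) :
    Summable fun m : ℤ => Real.exp (-c * (m : ℝ) ^ 2) := by
  have key : Summable fun m : ℕ => Real.exp (-c * (m : ℝ) ^ 2) := by
    have hgeom : Summable fun m : ℕ => Real.exp (-c) ^ m :=
      summable_geometric_of_lt_one (Real.exp_nonneg _)
        (Real.exp_lt_one_iff.mpr (by linarith))
    refine Summable.of_nonneg_of_le (fun m => (Real.exp_pos _).le) (fun m => ?_) hgeom
    rw [← Real.exp_nat_mul]
    apply Real.exp_le_exp.mpr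
    have h1 : (m : ℝ) ≤ (m : ℝ) ^ 2 := by
      exact_mod_cast Nat.le_self_pow two_ne_zero m
    nlinarith [mul_le_mul_of_nonneg_left h1 hc.le]
  refine Summable.of_nat_of_neg (by simpa using key) ?_
  simpa using key

lemma summable_exp_neg_sum_sq : ∀ (n : ℕ) {c : ℝ}, 0 < c →
    Summable fun ω : Fin n → ℤ => Real.exp (-c * ∑ j, ((ω j : ℝ)) ^ 2) := by
  intro n
  induction n with
  | zero =>
    intro c hc
    haveI : Unique (Fin 0 → ℤ) := ⟨⟨fun i => i.elim0⟩, fun f => funext fun i => i.elim0⟩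
    exact .of_finite
  | succ n ih =>
    intro c hc
    have h2 : Summable fun p : ℤ × (Fin n → ℤ) =>
        Real.exp (-c * (p.1 : ℝ) ^ 2) * Real.exp (-c * ∑ j, ((p.2 j : ℝ)) ^ 2) :=
      Summable.mul_of_nonneg (summable_exp_neg_int_sq hc) (ih hc)
        (fun _ => (Real.exp_pos _).le) (fun _ => (Real.exp_pos _).le)
    refine (Fin.consEquiv (fun _ : Fin (n + 1) => ℤ)).summable_iff.mp (h2.congr fun p => ?_)
    simp only [Function.comp, Fin.consEquiv_apply, ← Real.exp_add]
    congr 1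
    rw [Fin.sum_univ_succ]
    simp [Fin.cons_zero, Fin.cons_succ]
    ring

lemma norm_sq_lower (hM : M.det ≠ 0) (v : Fin n → ℝ) :
    ∑ j, v j ^ 2 ≤ ((∑ j, ∑ i, (M⁻¹ j i) ^ 2) + 1) * ∑ i, (M.mulVec v i) ^ 2 := by
  have hv : ∀ j, v j = ∑ i, M⁻¹ j i * M.mulVec v i := by
    intro j
    have h : (M⁻¹).mulVec (M.mulVec v) = v := by
      rw [Matrix.mulVec_mulVec, Matrix.nonsing_inv_mul M (isUnit_iff_ne_zero.mpr hM),
        Matrix.one_mulVec]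
    conv_lhs => rw [← h]
    rfl
  have h1 : ∀ j, v j ^ 2 ≤ (∑ i, (M⁻¹ j i) ^ 2) * ∑ i, (M.mulVec v i) ^ 2 := by
    intro j
    rw [hv j]
    exact Finset.sum_mul_sq_le_sq_mul_sq _ _ _
  calc ∑ j, v j ^ 2 ≤ ∑ j, ((∑ i, (M⁻¹ j i) ^ 2) * ∑ i, (M.mulVec v i) ^ 2) :=
        Finset.sum_le_sum fun j _ => h1 j
    _ = (∑ j, ∑ i, (M⁻¹ j i) ^ 2) * ∑ i, (M.mulVec v i) ^ 2 := by
        rw [Finset.sum_mul]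
    _ ≤ ((∑ j, ∑ i, (M⁻¹ j i) ^ 2) + 1) * ∑ i, (M.mulVec v i) ^ 2 := by
        have : (0:ℝ) ≤ ∑ i, (M.mulVec v i) ^ 2 := Finset.sum_nonneg fun i _ => sq_nonneg _
        nlinarith

lemma summable_gterm (hM : M.det ≠ 0) (hx : 0 < x) (u : Fin n → ℝ) :
    Summable (gterm M x u) := by
  have main : Summable fun ω : Fin n → ℤ =>
      Real.exp (-x * ∑ i, (M.mulVec (iz ω) i + u i) ^ 2) := by
    set K := (∑ j, ∑ i, (M⁻¹ j i) ^ 2) + 1 with hKdef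
    have hKpos : (0:ℝ) < K := by
      have : (0:ℝ) ≤ ∑ j, ∑ i, (M⁻¹ j i) ^ 2 :=
        Finset.sum_nonneg fun j _ => Finset.sum_nonneg fun i _ => sq_nonneg _
      rw [hKdef]
      linarith
    have hc : 0 < x / (2 * K) := by positivity
    refine Summable.of_nonneg_of_le (fun ω => (Real.exp_pos _).le) (fun ω => ?_)
      (((summable_exp_neg_sum_sq n hc).mul_left (Real.exp (x * ∑ i, u i ^ 2))))
    rw [← Real.exp_add]
    apply Real.exp_le_exp.mpr
    have h2 : ∑ j, (iz ω j) ^ 2 ≤ K * ∑ i, (M.mulVec (iz ω) i) ^ 2 := norm_sq_lower hM (iz ω)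
    have h1 : ∑ i, (M.mulVec (iz ω) i) ^ 2 ≤
        2 * (∑ i, (M.mulVec (iz ω) i + u i) ^ 2) + 2 * (∑ i, u i ^ 2) := by
      have hstep : ∀ i ∈ Finset.univ, (M.mulVec (iz ω) i) ^ 2 ≤
          2 * (M.mulVec (iz ω) i + u i) ^ 2 + 2 * u i ^ 2 := by
        intro i _
        nlinarith [sq_nonneg (M.mulVec (iz ω) i + 2 * u i)]
      calc ∑ i, (M.mulVec (iz ω) i) ^ 2
          ≤ ∑ i, (2 * (M.mulVec (iz ω) i + u i) ^ 2 + 2 * u i ^ 2) := Finset.sum_le_sum hstep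
        _ = 2 * (∑ i, (M.mulVec (iz ω) i + u i) ^ 2) + 2 * (∑ i, u i ^ 2) := by
            rw [Finset.sum_add_distrib, ← Finset.mul_sum, ← Finset.mul_sum]
    have hWsq : ∑ j, ((ω j : ℝ)) ^ 2 = ∑ j, (iz ω j) ^ 2 := rfl
    have hcm : x / (2 * K) * K = x / 2 := by field_simp
    have h3 : x / (2 * K) * (∑ j, (iz ω j) ^ 2) ≤
        x / (2 * K) * (K * ∑ i, (M.mulVec (iz ω) i) ^ 2) :=
      mul_le_mul_of_nonneg_left h2 hc.le
    rw [← mul_assoc, hcm] at h3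
    have h4 : x / 2 * (∑ i, (M.mulVec (iz ω) i) ^ 2) ≤
        x / 2 * (2 * (∑ i, (M.mulVec (iz ω) i + u i) ^ 2) + 2 * (∑ i, u i ^ 2)) :=
      mul_le_mul_of_nonneg_left h1 (by positivity)
    rw [hWsq]
    linarith
  exact main

lemma summable_gterm_norm (hM : M.det ≠ 0) (hx : 0 < x) (u : Fin n → ℝ) :
    Summable fun ω => ‖gterm M x u ω‖ :=
  (summable_gterm hM hx u).congr fun ω => (Real.norm_of_nonneg (gterm_pos M x u ω).le).symm

/-- The pairing equivalence `(ε, m, l) ↦ (m + l + ε, m - l)` onto pairs of equal parity. -/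
def pairEquiv (n : ℕ) :
    ((Fin n → Bool) × ((Fin n → ℤ) × (Fin n → ℤ))) ≃ ((Fin n → ℤ) × (Fin n → ℤ)) where
  toFun z := (fun j => z.2.1 j + z.2.2 j + (if z.1 j then 1 else 0),
              fun j => z.2.1 j - z.2.2 j)
  invFun p := (fun j => decide ((p.1 j + p.2 j) % 2 = 1),
               (fun j => (p.1 j + p.2 j) / 2, fun j => (p.1 j + p.2 j) / 2 - p.2 j))
  left_inv := by
    rintro ⟨ε, m, l⟩
    refine Prod.ext ?_ (Prod.ext ?_ ?_) <;> funext j <;> rcases hε : ε j <;>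
      simp [hε, Int.add_mul_emod_self_left] <;> omega
  right_inv := by
    rintro ⟨ω, σ⟩
    refine Prod.ext ?_ ?_
    · funext j
      simp only
      rcases Int.emod_two_eq_zero_or_one (ω j + σ j) with h | h <;> simp [h] <;> omega
    · funext j
      simp only
      omega

/-- the key reindexing identity -/
lemma key_identity (hM : M.det ≠ 0) (hx : 0 < x) (v w : Fin n → ℝ) :
    Th M x (v + w) * Th M x (v - w) =
      ∑ ε : Fin n → Bool,
        Th M (2 * x) (fun i => M.mulVec (bb ε) i / 2 + v i) *
          Th M (2 * x) (fun i => M.mulVec (bb ε) i / 2 + w i) := by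
  have h2x : 0 < 2 * x := by linarith
  have hf' := summable_gterm_norm hM hx (v + w)
  have hg' := summable_gterm_norm hM hx (v - w)
  have step1 : Th M x (v + w) * Th M x (v - w) =
      ∑' p : (Fin n → ℤ) × (Fin n → ℤ), gterm M x (v + w) p.1 * gterm M x (v - w) p.2 :=
    tsum_mul_tsum_of_summable_norm hf' hg'
  set F : (Fin n → ℤ) × (Fin n → ℤ) → ℝ :=
    fun p => gterm M x (v + w) p.1 * gterm M x (v - w) p.2 with hF
  have hFsummable : Summable F := summable_mul_of_summable_norm hf' hg'
  have step2 : (∑' p, F p) = ∑' z, F (pairEquiv n z) := ((pairEquiv n).tsum_eq F).symm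
  have step3 : ∀ z : (Fin n → Bool) × ((Fin n → ℤ) × (Fin n → ℤ)),
      F (pairEquiv n z) =
        gterm M (2 * x) (fun i => M.mulVec (bb z.1) i / 2 + v i) z.2.1 *
          gterm M (2 * x) (fun i => M.mulVec (bb z.1) i / 2 + w i) z.2.2 := by
    rintro ⟨ε, m, l⟩
    simp only [hF, pairEquiv, Equiv.coe_fn_mk, gterm]
    rw [← Real.exp_add, ← Real.exp_add]
    congr 1
    have cast1 : iz (fun j => m j + l j + (if ε j then 1 else 0)) = iz m + iz l + bb ε := by
      funext j
      rcases hε : ε j <;> simp [iz, bb, hε]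
    have cast2 : iz (fun j => m j - l j) = iz m - iz l := by
      funext j; simp [iz]
    rw [cast1, cast2, Matrix.mulVec_add, Matrix.mulVec_add, Matrix.mulVec_sub]
    simp only [Pi.add_apply, Pi.sub_apply]
    have key : ∑ i, (x * ((M.mulVec (iz m) i + M.mulVec (iz l) i + M.mulVec (bb ε) i
          + (v i + w i)) ^ 2) + x * ((M.mulVec (iz m) i - M.mulVec (iz l) i
          + (v i - w i)) ^ 2)) =
        ∑ i, (2 * x * ((M.mulVec (iz m) i + (M.mulVec (bb ε) i / 2 + v i)) ^ 2)
          + 2 * x * ((M.mulVec (iz l) i + (M.mulVec (bb ε) i / 2 + w i)) ^ 2)) := by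
      refine Finset.sum_congr rfl fun i _ => ?_
      ring
    simp only [Finset.sum_add_distrib, ← Finset.mul_sum] at key
    linarith
  have hFE : Summable fun z => F (pairEquiv n z) :=
    (Equiv.summable_iff (pairEquiv n)).mpr hFsummable
  have hG : Summable fun z : (Fin n → Bool) × ((Fin n → ℤ) × (Fin n → ℤ)) =>
      gterm M (2 * x) (fun i => M.mulVec (bb z.1) i / 2 + v i) z.2.1 *
        gterm M (2 * x) (fun i => M.mulVec (bb z.1) i / 2 + w i) z.2.2 :=
    hFE.congr step3
  have hGinner : ∀ ε : Fin n → Bool,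
      Summable fun p : (Fin n → ℤ) × (Fin n → ℤ) =>
        gterm M (2 * x) (fun i => M.mulVec (bb ε) i / 2 + v i) p.1 *
          gterm M (2 * x) (fun i => M.mulVec (bb ε) i / 2 + w i) p.2 := by
    intro ε
    exact Summable.mul_of_nonneg (summable_gterm hM h2x _) (summable_gterm hM h2x _)
      (fun m => (gterm_pos _ _ _ m).le) (fun l => (gterm_pos _ _ _ l).le)
  rw [step1, step2, tsum_congr step3, Summable.tsum_prod' hG hGinner, tsum_fintype]
  refine Finset.sum_congr rfl fun ε _ => ?_
  have hA' := summable_gterm_norm hM h2x (fun i => M.mulVec (bb ε) i / 2 + v i)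
  have hB' := summable_gterm_norm hM h2x (fun i => M.mulVec (bb ε) i / 2 + w i)
  exact (tsum_mul_tsum_of_summable_norm hA' hB').symm

lemma Th_nonneg (M : Matrix (Fin n) (Fin n) ℝ) (x : ℝ) (u : Fin n → ℝ) : 0 ≤ Th M x u :=
  tsum_nonneg fun ω => (gterm_pos M x u ω).le

lemma one_le_Th_zero (hM : M.det ≠ 0) (hx : 0 < x) : 1 ≤ Th M x 0 := by
  have h0 : gterm M x 0 0 = 1 := by
    have hz : iz (0 : Fin n → ℤ) = (0 : Fin n → ℝ) := by funext j; simp [iz]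
    simp [gterm, hz, Matrix.mulVec_zero]
  calc (1:ℝ) = gterm M x 0 0 := h0.symm
    _ ≤ Th M x 0 := Summable.le_tsum (summable_gterm hM hx 0) 0 fun ω _ => (gterm_pos M x 0 ω).le

/-- periodicity -/
lemma Th_periodic (hM : M.det ≠ 0) (hx : 0 < x) (γ : Fin n → ℤ) (z : Fin n → ℝ) :
    Th M x (fun i => M.mulVec (iz γ) i + z i) = Th M x z := by
  have h : ∀ ω : Fin n → ℤ, gterm M x (fun i => M.mulVec (iz γ) i + z i) ω
      = gterm M x z (ω + γ) := by
    intro ω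
    have hcast : iz (ω + γ) = iz ω + iz γ := by funext j; simp [iz]
    simp only [gterm, hcast, Matrix.mulVec_add, Pi.add_apply]
    congr 1
    refine congrArg _ (Finset.sum_congr rfl fun i _ => ?_)
    ring
  rw [Th, tsum_congr h]
  exact (Equiv.addRight γ).tsum_eq (gterm M x z)

/-- crude uniform bound -/
lemma Th_bound (hM : M.det ≠ 0) (hx : 0 < x) (u : Fin n → ℝ) :
    Th M x u ≤ Real.exp (x * ∑ i, (∑ j, |M i j|) ^ 2) * Th M (x / 2) 0 := by
  set c := (M⁻¹).mulVec u with hc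
  set γ : Fin n → ℤ := fun j => ⌊c j⌋ with hγ
  set r : Fin n → ℝ := fun j => Int.fract (c j) with hr
  have hdecomp : u = fun i => M.mulVec (iz γ) i + M.mulVec r i := by
    have h1 : iz γ + r = c := by
      funext j
      show (⌊c j⌋ : ℝ) + Int.fract (c j) = c j
      exact Int.floor_add_fract (c j)
    have h2 : M.mulVec c = u := by
      rw [hc, Matrix.mulVec_mulVec, Matrix.mul_nonsing_inv M (isUnit_iff_ne_zero.mpr hM),
        Matrix.one_mulVec]
    funext i
    rw [← h2, ← h1, Matrix.mulVec_add, Pi.add_apply]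
  have hper : Th M x u = Th M x (M.mulVec r) := by
    conv_lhs => rw [hdecomp]
    exact Th_periodic hM hx γ (M.mulVec r)
  rw [hper]
  have hrb : ∀ j, |r j| ≤ 1 := by
    intro j
    rw [abs_of_nonneg (Int.fract_nonneg _)]
    exact (Int.fract_lt_one _).le
  have hMr : ∀ i, |M.mulVec r i| ≤ ∑ j, |M i j| := by
    intro i
    calc |M.mulVec r i| = |∑ j, M i j * r j| := rfl
      _ ≤ ∑ j, |M i j * r j| := Finset.abs_sum_le_sum_abs _ _
      _ ≤ ∑ j, |M i j| := by
          refine Finset.sum_le_sum fun j _ => ?_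
          rw [abs_mul]
          calc |M i j| * |r j| ≤ |M i j| * 1 :=
            mul_le_mul_of_nonneg_left (hrb j) (abs_nonneg _)
          _ = |M i j| := mul_one _
  have hterm : ∀ ω, gterm M x (M.mulVec r) ω ≤
      Real.exp (x * ∑ i, (∑ j, |M i j|) ^ 2) * gterm M (x / 2) 0 ω := by
    intro ω
    simp only [gterm, Pi.zero_apply, add_zero, ← Real.exp_add]
    apply Real.exp_le_exp.mpr
    have hA : ∀ i ∈ Finset.univ, (x / 2) * (M.mulVec (iz ω) i) ^ 2 - x * (M.mulVec r i) ^ 2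
        ≤ x * (M.mulVec (iz ω) i + M.mulVec r i) ^ 2 := by
      intro i _
      nlinarith [sq_nonneg (M.mulVec (iz ω) i + 2 * M.mulVec r i), hx.le]
    have hsum := Finset.sum_le_sum hA
    have hb : ∑ i, (M.mulVec r i) ^ 2 ≤ ∑ i, (∑ j, |M i j|) ^ 2 := by
      refine Finset.sum_le_sum fun i _ => ?_
      rw [← sq_abs (M.mulVec r i)]
      exact pow_le_pow_left₀ (abs_nonneg _) (hMr i) 2
    simp only [Finset.sum_sub_distrib, ← Finset.mul_sum] at hsum
    nlinarith [hsum, mul_le_mul_of_nonneg_left hb hx.le]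
  calc Th M x (M.mulVec r) ≤ ∑' ω, Real.exp (x * ∑ i, (∑ j, |M i j|) ^ 2) * gterm M (x / 2) 0 ω :=
        Summable.tsum_le_tsum hterm (summable_gterm hM hx _)
          ((summable_gterm hM (by linarith) 0).mul_left _)
    _ = Real.exp (x * ∑ i, (∑ j, |M i j|) ^ 2) * Th M (x / 2) 0 := tsum_mul_left

/-- Step A : the translated theta is at most the centered one. -/
lemma Th_le (hM : M.det ≠ 0) (hx : 0 < x) (u : Fin n → ℝ) : Th M x u ≤ Th M x 0 := by
  have h2x : 0 < 2 * x := by linarith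
  set g := sSup (Set.range fun u => Th M x u) with hg
  have hbdd : BddAbove (Set.range fun u => Th M x u) := by
    refine ⟨Real.exp (x * ∑ i, (∑ j, |M i j|) ^ 2) * Th M (x / 2) 0, ?_⟩
    rintro _ ⟨u', rfl⟩
    exact Th_bound hM hx u'
  have hub : ∀ u', Th M x u' ≤ g := fun u' => le_csSup hbdd ⟨u', rfl⟩
  have hθ1 : 1 ≤ Th M x 0 := one_le_Th_zero hM hx
  have hθg : Th M x 0 ≤ g := hub 0
  have amgm : ∀ u', (Th M x u') ^ 2 ≤ (Th M x 0 ^ 2 + g * Th M x 0) / 2 := by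
    intro u'
    have K1 := key_identity hM hx u' 0
    have K2 := key_identity hM hx (0 : Fin n → ℝ) 0
    have K3 := key_identity hM hx u' u'
    simp only [add_zero, sub_zero, sub_self, Pi.zero_apply] at K1 K2 K3
    have hsum : ∑ ε : Fin n → Bool,
        Th M (2 * x) (fun i => M.mulVec (bb ε) i / 2 + u' i) *
          Th M (2 * x) (fun i => M.mulVec (bb ε) i / 2) ≤
        ((∑ ε : Fin n → Bool,
          Th M (2 * x) (fun i => M.mulVec (bb ε) i / 2 + u' i) *
            Th M (2 * x) (fun i => M.mulVec (bb ε) i / 2 + u' i)) +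
         (∑ ε : Fin n → Bool,
          Th M (2 * x) (fun i => M.mulVec (bb ε) i / 2) *
            Th M (2 * x) (fun i => M.mulVec (bb ε) i / 2))) / 2 := by
      rw [← Finset.sum_add_distrib, Finset.sum_div]
      refine Finset.sum_le_sum fun ε _ => ?_
      nlinarith [sq_nonneg (Th M (2 * x) (fun i => M.mulVec (bb ε) i / 2 + u' i) -
        Th M (2 * x) (fun i => M.mulVec (bb ε) i / 2))]
    rw [← K1, ← K2, ← K3] at hsum
    have hu2 : Th M x (u' + u') ≤ g := hub _
    have h0 : 0 ≤ Th M x 0 := Th_nonneg M x 0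
    nlinarith [hsum, mul_le_mul_of_nonneg_right hu2 h0]
  have hgs : g ≤ Real.sqrt ((Th M x 0 ^ 2 + g * Th M x 0) / 2) := by
    apply csSup_le (Set.range_nonempty _)
    rintro _ ⟨u', rfl⟩
    rw [show ((Th M x 0 ^ 2 + g * Th M x 0) / 2) =
        Real.sqrt ((Th M x 0 ^ 2 + g * Th M x 0) / 2) ^ 2
      from (Real.sq_sqrt (by nlinarith [Th_nonneg M x 0, hθ1, hθg])).symm] at amgm
    have := amgm u'
    nlinarith [Real.sqrt_nonneg ((Th M x 0 ^ 2 + g * Th M x 0) / 2), Th_nonneg M x u',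
      sq_nonneg (Th M x u' - Real.sqrt ((Th M x 0 ^ 2 + g * Th M x 0) / 2))]
  have hg2 : g ^ 2 ≤ (Th M x 0 ^ 2 + g * Th M x 0) / 2 := by
    have hgnn : 0 ≤ g := le_trans (by linarith) hθg
    nlinarith [hgs, Real.sq_sqrt (show (0:ℝ) ≤ (Th M x 0 ^ 2 + g * Th M x 0) / 2 by nlinarith),
      Real.sqrt_nonneg ((Th M x 0 ^ 2 + g * Th M x 0) / 2)]
  have hfin : g ≤ Th M x 0 := by nlinarith [hθ1, hθg]
  exact le_trans (hub u) hfin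

/-- equality propagates from parameter x to 2x -/
lemma eq_step (hM : M.det ≠ 0) (hx : 0 < x) (u : Fin n → ℝ)
    (h : Th M x u = Th M x 0) : Th M (2 * x) u = Th M (2 * x) 0 := by
  have K1 := key_identity hM hx u 0
  have K2 := key_identity hM hx (0 : Fin n → ℝ) 0
  have K3 := key_identity hM hx u u
  simp only [add_zero, sub_zero, sub_self, Pi.zero_apply] at K1 K2 K3
  have hexp : ∀ (A B : (Fin n → Bool) → ℝ), ∑ ε : Fin n → Bool, (A ε - B ε) ^ 2 =
      ((∑ ε : Fin n → Bool, A ε * A ε) - 2 * (∑ ε : Fin n → Bool, A ε * B ε))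
        + ∑ ε : Fin n → Bool, B ε * B ε := by
    intro A B
    rw [Finset.mul_sum, ← Finset.sum_sub_distrib, ← Finset.sum_add_distrib]
    exact Finset.sum_congr rfl fun ε _ => by ring
  have hD := hexp (fun ε => Th M (2 * x) (fun i => M.mulVec (bb ε) i / 2 + u i))
    (fun ε => Th M (2 * x) (fun i => M.mulVec (bb ε) i / 2))
  rw [← K1, ← K2, ← K3] at hD
  rw [h] at hD
  have hle : Th M x (u + u) ≤ Th M x 0 := Th_le hM hx (u + u)
  have h0 : (0:ℝ) ≤ Th M x 0 := Th_nonneg M x 0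
  have hsumle : ∑ ε : Fin n → Bool,
      ((fun ε => Th M (2 * x) (fun i => M.mulVec (bb ε) i / 2 + u i)) ε -
       (fun ε => Th M (2 * x) (fun i => M.mulVec (bb ε) i / 2)) ε) ^ 2 ≤ 0 := by
    rw [hD]
    nlinarith [mul_le_mul_of_nonneg_right hle h0]
  have hsumzero : ∑ ε : Fin n → Bool,
      ((fun ε => Th M (2 * x) (fun i => M.mulVec (bb ε) i / 2 + u i)) ε -
       (fun ε => Th M (2 * x) (fun i => M.mulVec (bb ε) i / 2)) ε) ^ 2 = 0 :=
    le_antisymm hsumle (Finset.sum_nonneg fun ε _ => sq_nonneg _)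
  have hall := (Finset.sum_eq_zero_iff_of_nonneg
    (fun ε _ => sq_nonneg _)).mp hsumzero (fun _ => false) (Finset.mem_univ _)
  have hzero : (fun i => M.mulVec (bb (fun _ : Fin n => false)) i / 2 + u i) = u ∧
      (fun i => M.mulVec (bb (fun _ : Fin n => false)) i / 2) = (0 : Fin n → ℝ) := by
    have hbb : bb (fun _ : Fin n => false) = (0 : Fin n → ℝ) := by
      funext j; simp [bb]
    constructor <;> funext i <;> simp [hbb, Matrix.mulVec_zero]
  simp only at hall
  rw [hzero.1, hzero.2] at hall
  have hsub := pow_eq_zero_iff (n := 2) (by norm_num) |>.mp hall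
  linarith [sub_eq_zero.mp hsub]

/-- main contradiction for u not in the lattice -/
lemma not_lattice_lt (hM : M.det ≠ 0) (hx : 0 < x) (u : Fin n → ℝ)
    (hu : ∀ ω : Fin n → ℤ, u ≠ M.mulVec (iz ω)) (h : Th M x u = Th M x 0) : False := by
  have hS : ∀ ω : Fin n → ℤ, 0 < ∑ i, (M.mulVec (iz ω) i + u i) ^ 2 := by
    intro ω
    have hne : ∃ i, M.mulVec (iz ω) i + u i ≠ 0 := by
      by_contra hc
      push_neg at hc
      apply hu (-ω)
      funext i
      have hcast : iz (-ω) = -iz ω := by funext j; simp [iz]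
      rw [hcast, Matrix.mulVec_neg, Pi.neg_apply]
      linarith [hc i]
    obtain ⟨i, hi⟩ := hne
    refine Finset.sum_pos' (fun i _ => sq_nonneg _) ⟨i, Finset.mem_univ _, ?_⟩
    positivity
  have hk : ∀ k : ℕ, Th M ((2:ℝ) ^ k * x) u = Th M ((2:ℝ) ^ k * x) 0 := by
    intro k
    induction k with
    | zero => simpa using h
    | succ k ih =>
      have hxk : 0 < (2:ℝ) ^ k * x := by positivity
      have hstep := eq_step hM hxk u ih
      rw [show (2:ℝ) ^ (k + 1) * x = 2 * ((2:ℝ) ^ k * x) by ring]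
      exact hstep
  have htend : Filter.Tendsto (fun k : ℕ => Th M ((2:ℝ) ^ k * x) u)
      Filter.atTop (𝓝 0) := by
    have h0 : (0:ℝ) = ∑' _ : Fin n → ℤ, (0:ℝ) := tsum_zero.symm
    rw [h0]
    apply tendsto_tsum_of_dominated_convergence (bound := gterm M x u)
      (summable_gterm hM hx u)
    · intro ω
      have h1 : Filter.Tendsto (fun k : ℕ => (2:ℝ) ^ k) Filter.atTop Filter.atTop :=
        tendsto_pow_atTop_atTop_of_one_lt one_lt_two
      have h2 := h1.atTop_mul_const (mul_pos hx (hS ω))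
      have h3 : Filter.Tendsto
          (fun k : ℕ => -((2:ℝ) ^ k * (x * ∑ i, (M.mulVec (iz ω) i + u i) ^ 2)))
          Filter.atTop Filter.atBot := tendsto_neg_atTop_atBot.comp h2
      have h4 := Real.tendsto_exp_atBot.comp h3
      refine h4.congr fun k => ?_
      simp only [Function.comp, gterm]
      congr 1
      ring
    · refine Filter.Eventually.of_forall fun k => fun ω => ?_
      rw [Real.norm_of_nonneg (gterm_pos _ _ _ _).le]
      unfold gterm
      apply Real.exp_le_exp.mpr
      have h2k : (1:ℝ) ≤ 2 ^ k := one_le_pow₀ one_le_two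
      nlinarith [hS ω, mul_le_mul_of_nonneg_right h2k (mul_pos hx (hS ω)).le]
  have hge : ∀ k : ℕ, (1:ℝ) ≤ Th M ((2:ℝ) ^ k * x) u := by
    intro k
    rw [hk k]
    exact one_le_Th_zero hM (by positivity)
  have hcontr := ge_of_tendsto' htend hge
  linarith

end GaussLatticeAux

open GaussLatticeAux in
theorem translated_gaussian_sum_le_iff {n : ℕ} (M : Matrix (Fin n) (Fin n) ℝ)
    (hM : M.det ≠ 0) (x : ℝ) (hx : 0 < x) (u : Fin n → ℝ) :
    (∑' ω : Fin n → ℤ,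
        Real.exp (-x * ∑ i, (M.mulVec (fun j => (ω j : ℝ)) i + u i) ^ 2)) ≤ psi M x ∧
    ((∑' ω : Fin n → ℤ,
        Real.exp (-x * ∑ i, (M.mulVec (fun j => (ω j : ℝ)) i + u i) ^ 2)) = psi M x ↔
      u ∈ latticeSet M) := by
  have hpsi : psi M x = Th M x 0 := by
    refine tsum_congr fun ω => ?_
    simp only [gterm, Pi.zero_apply, add_zero]
    rfl
  have hTu : (∑' ω : Fin n → ℤ,
      Real.exp (-x * ∑ i, (M.mulVec (fun j => (ω j : ℝ)) i + u i) ^ 2)) = Th M x u := rfl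
  rw [hpsi, hTu]
  refine ⟨Th_le hM hx u, ?_, ?_⟩
  · intro h
    by_contra hu
    refine not_lattice_lt hM hx u (fun ω hcon => hu ⟨ω, ?_⟩) h
    exact hcon
  · rintro ⟨ω₀, rfl⟩
    have := Th_periodic hM hx ω₀ (0 : Fin n → ℝ)
    rw [show (fun i => M.mulVec (iz ω₀) i + (0 : Fin n → ℝ) i) = M.mulVec (iz ω₀) from
      funext fun i => by simp] at this
    exact this
end

section
/- Let Λ_o be the orthogonal lattice in ℝⁿ generated by a₁e₁, …, aₙeₙ with all aᵢ > 0, and let Λ_s be a lattice generated by an upper triangular matrix M_s with diagonal entries a₁, …, aₙ such that Λ_s ≠ Λ_o. Then for all x > 0, ψ_{Λ_s}(x) < ψ_{Λ_o}(x). -/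
open scoped BigOperators

set_option maxHeartbeats 2000000

open Real

section Aux

lemma summable_exp_neg_sq_int {b : ℝ} (hb : 0 < b) :
    Summable fun n : ℤ => rexp (-b * (n : ℝ) ^ 2) := by
  have key : Summable fun n : ℕ => rexp (-b * (n : ℝ) ^ 2) := by
    refine Summable.of_nonneg_of_le (fun n => (exp_pos _).le) (fun n => ?_)
      (summable_geometric_of_lt_one (exp_pos (-b)).le (by rw [exp_lt_one_iff]; linarith))
    rw [← Real.exp_nat_mul]
    apply Real.exp_le_exp.mpr
    have h : (n : ℝ) ≤ (n : ℝ) ^ 2 := by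
      rcases Nat.eq_zero_or_pos n with h | h
      · simp [h]
      · have : (1 : ℝ) ≤ (n : ℝ) := by exact_mod_cast h
        nlinarith
    nlinarith
  refine Summable.of_nat_of_neg ?_ ?_ <;> · simpa using key

lemma summable_exp_neg_sq_int_shift {b : ℝ} (hb : 0 < b) (γ : ℝ) :
    Summable fun n : ℤ => rexp (-b * ((n : ℝ) + γ) ^ 2) := by
  have h2 : (0:ℝ) < b / 2 := by linarith
  refine Summable.of_nonneg_of_le (fun n => (exp_pos _).le) (fun n => ?_)
    (((summable_exp_neg_sq_int h2).mul_left (rexp (b * γ ^ 2))))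
  rw [← Real.exp_add]
  apply Real.exp_le_exp.mpr
  nlinarith [sq_nonneg ((n : ℝ) + 2 * γ)]

lemma summable_gauss_line {x d : ℝ} (hx : 0 < x) (hd : 0 < d) (c : ℝ) :
    Summable fun t : ℤ => rexp (-x * (d * t + c) ^ 2) := by
  have h : ∀ t : ℤ, -x * (d * t + c) ^ 2 = -(x * d ^ 2) * ((t : ℝ) + c / d) ^ 2 := by
    intro t; field_simp
  simp only [h]
  exact summable_exp_neg_sq_int_shift (by positivity) _

lemma poisson_formula {a : ℝ} (ha : 0 < a) (γ : ℝ) :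
    ∑' t : ℤ, rexp (-π * a * ((t : ℝ) + γ) ^ 2)
      = (a ^ (1/2 : ℝ))⁻¹ * ∑' n : ℤ, rexp (-π / a * (n : ℝ) ^ 2) * Real.cos (2 * π * γ * n) := by
  have ha' : (a : ℂ) ≠ 0 := by exact_mod_cast ha.ne'
  have h1 := Complex.tsum_exp_neg_quadratic (show 0 < (a : ℂ).re by simpa using ha)
    ((-(a * γ) : ℝ) : ℂ)
  set S := ∑' n : ℤ, Complex.exp (((-π / a * (n : ℝ) ^ 2 : ℝ) : ℂ) + ((2 * π * γ * n : ℝ) : ℂ) * Complex.I) with hS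
  have hSsum : Summable fun n : ℤ =>
      Complex.exp (((-π / a * (n : ℝ) ^ 2 : ℝ) : ℂ) + ((2 * π * γ * n : ℝ) : ℂ) * Complex.I) := by
    have hsum := summable_exp_neg_sq_int (b := π / a) (by positivity)
    refine Summable.of_norm_bounded hsum (fun n => ?_)
    rw [Complex.norm_exp, neg_div]
    simp [← Complex.ofReal_pow]
  have hL : (↑(∑' t : ℤ, rexp (-π * a * ((t : ℝ) + γ) ^ 2)) : ℂ)
      = Complex.exp ((-(π * a * γ ^ 2) : ℝ) : ℂ)
        * ∑' n : ℤ, Complex.exp (-(π:ℂ) * a * (n:ℂ) ^ 2 + 2 * π * ((-(a * γ) : ℝ) : ℂ) * n) := by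
    rw [Complex.ofReal_tsum, ← tsum_mul_left]
    apply tsum_congr; intro t
    rw [Complex.ofReal_exp, ← Complex.exp_add]
    congr 1
    push_cast
    ring
  have hR : (∑' n : ℤ, Complex.exp (-(π:ℂ) / a * ((n:ℂ) + Complex.I * ((-(a * γ) : ℝ) : ℂ)) ^ 2))
      = Complex.exp (((π * a * γ ^ 2 : ℝ)) : ℂ) * S := by
    rw [hS, ← tsum_mul_left]
    apply tsum_congr; intro n
    rw [← Complex.exp_add]
    congr 1
    push_cast
    field_simp
    ring_nf
    rw [Complex.I_sq]
    ring
  have hF : (↑(∑' t : ℤ, rexp (-π * a * ((t : ℝ) + γ) ^ 2)) : ℂ)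
      = 1 / (a : ℂ) ^ (1/2 : ℂ) * S := by
    rw [hL, h1, hR]
    have hcc : Complex.exp ((-(π * a * γ ^ 2) : ℝ) : ℂ)
        * Complex.exp (((π * a * γ ^ 2 : ℝ)) : ℂ) = 1 := by
      rw [← Complex.exp_add]
      push_cast
      ring_nf
      exact Complex.exp_zero
    calc Complex.exp ((-(π * a * γ ^ 2) : ℝ) : ℂ)
          * (1 / (a : ℂ) ^ (1/2 : ℂ) * (Complex.exp (((π * a * γ ^ 2 : ℝ)) : ℂ) * S))
        = (Complex.exp ((-(π * a * γ ^ 2) : ℝ) : ℂ)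
            * Complex.exp (((π * a * γ ^ 2 : ℝ)) : ℂ)) * (1 / (a : ℂ) ^ (1/2 : ℂ) * S) := by ring
      _ = 1 / (a : ℂ) ^ (1/2 : ℂ) * S := by rw [hcc, one_mul]
  have hpow : (1 : ℂ) / (a : ℂ) ^ (1/2 : ℂ) = (((a ^ (1/2 : ℝ))⁻¹ : ℝ) : ℂ) := by
    have h12 : ((1:ℂ)/2) = ((1/2 : ℝ) : ℂ) := by norm_num
    rw [h12, ← Complex.ofReal_cpow ha.le]
    push_cast
    rw [one_div]
  have hre := congrArg Complex.re hF
  rw [Complex.ofReal_re, hpow, Complex.re_ofReal_mul] at hre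
  rw [hre]
  congr 1
  rw [hS, Complex.re_tsum hSsum]
  apply tsum_congr; intro n
  have e1 : (((-π / a * (n : ℝ) ^ 2 : ℝ) : ℂ) + ((2 * π * γ * n : ℝ) : ℂ) * Complex.I).re
      = -π / a * (n : ℝ) ^ 2 := by simp [← Complex.ofReal_pow]
  have e2 : (((-π / a * (n : ℝ) ^ 2 : ℝ) : ℂ) + ((2 * π * γ * n : ℝ) : ℂ) * Complex.I).im
      = 2 * π * γ * (n : ℝ) := by simp [← Complex.ofReal_pow]
  rw [Complex.exp_re, e1, e2]

lemma theta_summable_cos {a : ℝ} (ha : 0 < a) (γ : ℝ) :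
    Summable fun n : ℤ => rexp (-π / a * (n : ℝ) ^ 2) * Real.cos (2 * π * γ * n) := by
  have hsum := summable_exp_neg_sq_int (b := π / a) (by positivity)
  refine Summable.of_norm_bounded hsum (fun n => ?_)
  rw [Real.norm_eq_abs, abs_mul, abs_of_pos (exp_pos _), neg_div]
  calc rexp (-(π / a) * (n:ℝ)^2) * |Real.cos (2*π*γ*n)|
      ≤ rexp (-(π / a) * (n:ℝ)^2) * 1 :=
        mul_le_mul_of_nonneg_left (abs_cos_le_one _) (exp_pos _).le
    _ = rexp (-(π / a) * (n:ℝ)^2) := mul_one _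

lemma theta_le {a : ℝ} (ha : 0 < a) (γ : ℝ) :
    ∑' t : ℤ, rexp (-π * a * ((t : ℝ) + γ) ^ 2)
      ≤ ∑' t : ℤ, rexp (-π * a * ((t : ℝ) + 0) ^ 2) := by
  rw [poisson_formula ha γ, poisson_formula ha 0]
  apply mul_le_mul_of_nonneg_left _ (by positivity)
  apply (theta_summable_cos ha γ).tsum_le_tsum _ (theta_summable_cos ha 0)
  intro n
  apply mul_le_mul_of_nonneg_left _ (exp_pos _).le
  calc Real.cos (2*π*γ*n) ≤ 1 := Real.cos_le_one _
    _ = Real.cos (2*π*0*n) := by norm_num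

lemma theta_lt {a : ℝ} (ha : 0 < a) {γ : ℝ} (hγ : ¬∃ m : ℤ, γ = (m : ℝ)) :
    ∑' t : ℤ, rexp (-π * a * ((t : ℝ) + γ) ^ 2)
      < ∑' t : ℤ, rexp (-π * a * ((t : ℝ) + 0) ^ 2) := by
  rw [poisson_formula ha γ, poisson_formula ha 0]
  have hcos : Real.cos (2 * π * γ * (1:ℤ)) < 1 := by
    rcases lt_or_eq_of_le (Real.cos_le_one (2 * π * γ * (1:ℤ))) with h | h
    · exact h
    · exfalso
      obtain ⟨m, hm⟩ := (Real.cos_eq_one_iff _).mp h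
      refine hγ ⟨m, ?_⟩
      have hπ : (2 * π) ≠ 0 := by positivity
      push_cast at hm
      field_simp at hm
      have : (2*π) * (m:ℝ) = (2*π) * γ := by rw [hm]
      exact (mul_left_cancel₀ hπ this).symm
  apply mul_lt_mul_of_pos_left _ (by positivity)
  apply Summable.tsum_lt_tsum (i := (1:ℤ)) _ _ (theta_summable_cos ha γ) (theta_summable_cos ha 0)
  · intro n
    apply mul_le_mul_of_nonneg_left _ (exp_pos _).le
    calc Real.cos (2*π*γ*n) ≤ 1 := Real.cos_le_one _
      _ = Real.cos (2*π*0*n) := by norm_num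
  · apply mul_lt_mul_of_pos_left _ (exp_pos _)
    calc Real.cos (2*π*γ*(1:ℤ)) < 1 := hcos
      _ = Real.cos (2*π*0*(1:ℤ)) := by norm_num

lemma gauss_eq_theta {x d : ℝ} (hx : 0 < x) (hd : 0 < d) (c : ℝ) :
    ∑' t : ℤ, rexp (-x * (d * t + c) ^ 2)
      = ∑' t : ℤ, rexp (-π * (x * d ^ 2 / π) * ((t : ℝ) + c / d) ^ 2) := by
  apply tsum_congr; intro t
  congr 1
  have hπ : π ≠ 0 := pi_ne_zero
  field_simp

lemma gauss_sum_le {x d : ℝ} (hx : 0 < x) (hd : 0 < d) (c : ℝ) :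
    ∑' t : ℤ, rexp (-x * (d * t + c) ^ 2) ≤ ∑' t : ℤ, rexp (-x * (d * t) ^ 2) := by
  have h0 : ∑' t : ℤ, rexp (-x * (d * t) ^ 2) = ∑' t : ℤ, rexp (-x * (d * t + 0) ^ 2) := by
    simp
  rw [h0, gauss_eq_theta hx hd c, gauss_eq_theta hx hd 0]
  have : (0:ℝ) / d = 0 := zero_div d
  rw [this]
  exact theta_le (by positivity) _

lemma gauss_sum_lt {x d : ℝ} (hx : 0 < x) (hd : 0 < d) {c : ℝ} (hc : ¬∃ m : ℤ, c = d * m) :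
    ∑' t : ℤ, rexp (-x * (d * t + c) ^ 2) < ∑' t : ℤ, rexp (-x * (d * t) ^ 2) := by
  have h0 : ∑' t : ℤ, rexp (-x * (d * t) ^ 2) = ∑' t : ℤ, rexp (-x * (d * t + 0) ^ 2) := by
    simp
  rw [h0, gauss_eq_theta hx hd c, gauss_eq_theta hx hd 0]
  have : (0:ℝ) / d = 0 := zero_div d
  rw [this]
  apply theta_lt (by positivity)
  rintro ⟨m, hm⟩
  exact hc ⟨m, by field_simp at hm; linarith⟩

lemma summable_pi_gauss {n : ℕ} {c : ℝ} (hc : 0 < c) :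
    Summable fun ω : Fin n → ℤ => rexp (-c * ∑ i, ((ω i : ℝ)) ^ 2) := by
  induction n with
  | zero =>
    exact summable_of_finite_support (Set.toFinite _)
  | succ n ih =>
    have hprod : Summable fun p : ℤ × (Fin n → ℤ) =>
        rexp (-c * ((p.1 : ℝ))^2) * rexp (-c * ∑ i, ((p.2 i : ℝ))^2) :=
      (summable_exp_neg_sq_int hc).mul_of_nonneg ih (fun _ => (exp_pos _).le)
        (fun _ => (exp_pos _).le)
    have h2 := (Equiv.summable_iff (Fin.consEquiv (fun _ : Fin (n+1) => ℤ)).symm).mpr hprod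
    refine h2.congr (fun ω => ?_)
    show rexp (-c * ((ω 0 : ℝ))^2) * rexp (-c * ∑ i : Fin n, ((ω i.succ : ℝ))^2) = _
    rw [← Real.exp_add]
    congr 1
    rw [Fin.sum_univ_succ]
    ring

lemma summable_gauss_matrix {n : ℕ} {x : ℝ} (hx : 0 < x) (M : Matrix (Fin n) (Fin n) ℝ)
    (hM : IsUnit M.det) :
    Summable fun ω : Fin n → ℤ =>
      rexp (-x * ∑ i, (M.mulVec (fun j => (ω j : ℝ)) i) ^ 2) := by
  set B := M⁻¹ with hB
  have hBM : B * M = 1 := Matrix.nonsing_inv_mul M hM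
  set K : ℝ := ∑ i, (∑ j, |B i j|) ^ 2 with hK
  have hK0 : 0 ≤ K := Finset.sum_nonneg fun i _ => sq_nonneg _
  have hε : 0 < x / (K + 1) := by positivity
  refine Summable.of_nonneg_of_le (fun _ => (exp_pos _).le) (fun ω => ?_)
    (summable_pi_gauss hε)
  apply Real.exp_le_exp.mpr
  set v : Fin n → ℝ := M.mulVec (fun j => (ω j : ℝ)) with hv
  set S : ℝ := ∑ i, v i ^ 2 with hSdef
  have hS0 : 0 ≤ S := Finset.sum_nonneg fun i _ => sq_nonneg _
  have hrec : ∀ i, (ω i : ℝ) = ∑ j, B i j * v j := by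
    intro i
    have : B.mulVec v = fun j => (ω j : ℝ) := by
      rw [hv, Matrix.mulVec_mulVec, hBM, Matrix.one_mulVec]
    exact (congrFun this i).symm
  have hvS : ∀ j, |v j| ≤ Real.sqrt S := fun j =>
    abs_le_sqrt (Finset.single_le_sum (f := fun j => v j ^ 2)
      (fun i _ => sq_nonneg _) (Finset.mem_univ j))
  have hbound : ∀ i, ((ω i : ℝ)) ^ 2 ≤ (∑ j, |B i j|) ^ 2 * S := by
    intro i
    have h1 : |(ω i : ℝ)| ≤ (∑ j, |B i j|) * Real.sqrt S := by
      rw [hrec i]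
      calc |∑ j, B i j * v j| ≤ ∑ j, |B i j * v j| := Finset.abs_sum_le_sum_abs _ _
        _ ≤ ∑ j, |B i j| * Real.sqrt S := by
            apply Finset.sum_le_sum; intro j _
            rw [abs_mul]
            exact mul_le_mul_of_nonneg_left (hvS j) (abs_nonneg _)
        _ = (∑ j, |B i j|) * Real.sqrt S := by rw [Finset.sum_mul]
    calc ((ω i : ℝ)) ^ 2 = |(ω i : ℝ)| ^ 2 := (sq_abs _).symm
      _ ≤ ((∑ j, |B i j|) * Real.sqrt S) ^ 2 := by
          apply pow_le_pow_left₀ (abs_nonneg _) h1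
      _ = (∑ j, |B i j|) ^ 2 * (Real.sqrt S) ^ 2 := by rw [mul_pow]
      _ = (∑ j, |B i j|) ^ 2 * S := by rw [Real.sq_sqrt hS0]
  have hsum : ∑ i, ((ω i : ℝ)) ^ 2 ≤ (K + 1) * S := by
    calc ∑ i, ((ω i : ℝ)) ^ 2 ≤ ∑ i, (∑ j, |B i j|) ^ 2 * S :=
          Finset.sum_le_sum fun i _ => hbound i
      _ = K * S := by rw [hK, Finset.sum_mul]
      _ ≤ (K + 1) * S := by nlinarith
  rw [neg_mul, neg_mul, neg_le_neg_iff, div_mul_eq_mul_div, div_le_iff₀ (by positivity)]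
  calc x * ∑ i, ((ω i : ℝ)) ^ 2 ≤ x * ((K+1) * S) := by
        exact mul_le_mul_of_nonneg_left hsum hx.le
    _ = x * S * (K + 1) := by ring

noncomputable def gfun {n : ℕ} (M : Matrix (Fin n) (Fin n) ℝ) (x : ℝ) (ω : Fin n → ℤ) : ℝ :=
  Real.exp (-x * ∑ i, (M.mulVec (fun j => (ω j : ℝ)) i) ^ 2)

lemma psi_eq_tsum_gfun {n : ℕ} (M : Matrix (Fin n) (Fin n) ℝ) (x : ℝ) :
    psi M x = ∑' ω, gfun M x ω := rfl

noncomputable def wv {n : ℕ} (k : Fin n) (ω' : {j : Fin n // j ≠ k} → ℤ) : Fin n → ℝ :=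
  fun j => if h : j = k then 0 else ((ω' ⟨j, h⟩ : ℤ) : ℝ)

lemma gfun_split {n : ℕ} {x : ℝ} (M : Matrix (Fin n) (Fin n) ℝ) (k : Fin n)
    (hcol : ∀ i, i ≠ k → M i k = 0) (t : ℤ) (ω' : {j : Fin n // j ≠ k} → ℤ) :
    gfun M x ((Equiv.funSplitAt k ℤ).symm (t, ω'))
      = rexp (-x * (M k k * t + M.mulVec (wv k ω') k) ^ 2)
        * rexp (-x * ∑ i ∈ Finset.univ.erase k, (M.mulVec (wv k ω') i) ^ 2) := by
  have hω : (fun j => ((((Equiv.funSplitAt k ℤ).symm (t, ω')) j : ℤ) : ℝ))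
      = Pi.single k ((t : ℤ) : ℝ) + wv k ω' := by
    funext j
    by_cases h : j = k
    · subst h
      simp [Equiv.funSplitAt_symm_apply, wv]
    · simp [Equiv.funSplitAt_symm_apply, h, wv, Pi.single_apply]
  have hval : ∀ i, (M.mulVec (Pi.single k ((t : ℤ) : ℝ) + wv k ω')) i
      = M i k * t + M.mulVec (wv k ω') i := by
    intro i
    rw [Matrix.mulVec_add, Pi.add_apply, Matrix.mulVec_single, Pi.smul_apply, op_smul_eq_mul,
      Matrix.col_apply]
  unfold gfun
  rw [hω, ← Real.exp_add]
  congr 1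
  have hsplit : ∑ i, (M.mulVec (Pi.single k ((t : ℤ) : ℝ) + wv k ω') i) ^ 2
      = (M k k * t + M.mulVec (wv k ω') k) ^ 2
        + ∑ i ∈ Finset.univ.erase k, (M.mulVec (wv k ω') i) ^ 2 := by
    rw [← Finset.add_sum_erase _ _ (Finset.mem_univ k)]
    congr 1
    · rw [hval k]
    · apply Finset.sum_congr rfl
      intro i hi
      have hik : i ≠ k := Finset.ne_of_mem_erase hi
      rw [hval i, hcol i hik, zero_mul, zero_add]
  rw [hsplit]
  ring

def splitEquiv {n : ℕ} (k : Fin n) : (Fin n → ℤ) ≃ (({j : Fin n // j ≠ k} → ℤ) × ℤ) :=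
  (Equiv.funSplitAt k ℤ).trans (Equiv.prodComm _ _)

lemma splitEquiv_symm_apply {n : ℕ} (k : Fin n) (p : ({j : Fin n // j ≠ k} → ℤ) × ℤ) :
    (splitEquiv k).symm p = (Equiv.funSplitAt k ℤ).symm (p.2, p.1) := rfl

lemma psi_decomp {n : ℕ} {x : ℝ} (M : Matrix (Fin n) (Fin n) ℝ) (k : Fin n)
    (hcol : ∀ i, i ≠ k → M i k = 0) (hS : Summable (gfun M x)) :
    psi M x = ∑' ω' : {j : Fin n // j ≠ k} → ℤ,
      (∑' t : ℤ, rexp (-x * (M k k * t + M.mulVec (wv k ω') k) ^ 2))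
        * rexp (-x * ∑ i ∈ Finset.univ.erase k, (M.mulVec (wv k ω') i) ^ 2) := by
  classical
  have hsum2 : Summable (fun p : ({j : Fin n // j ≠ k} → ℤ) × ℤ => gfun M x ((splitEquiv k).symm p)) :=
    (Equiv.summable_iff (splitEquiv k).symm).mpr hS
  have h1 : psi M x = ∑' p : ({j : Fin n // j ≠ k} → ℤ) × ℤ, gfun M x ((splitEquiv k).symm p) := by
    rw [psi_eq_tsum_gfun]
    exact (Equiv.tsum_eq (splitEquiv k).symm _).symm
  rw [h1, hsum2.tsum_prod' (fun ω' => hsum2.prod_factor ω')]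
  apply tsum_congr; intro ω'
  rw [← tsum_mul_right]
  apply tsum_congr; intro t
  rw [splitEquiv_symm_apply]
  exact gfun_split M k hcol t ω'

lemma psi_decomp_summable {n : ℕ} {x : ℝ} (M : Matrix (Fin n) (Fin n) ℝ) (k : Fin n)
    (hcol : ∀ i, i ≠ k → M i k = 0) (hS : Summable (gfun M x)) :
    Summable (fun ω' : {j : Fin n // j ≠ k} → ℤ =>
      (∑' t : ℤ, rexp (-x * (M k k * t + M.mulVec (wv k ω') k) ^ 2))
        * rexp (-x * ∑ i ∈ Finset.univ.erase k, (M.mulVec (wv k ω') i) ^ 2)) := by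
  classical
  have hsum2 : Summable (fun p : ({j : Fin n // j ≠ k} → ℤ) × ℤ => gfun M x ((splitEquiv k).symm p)) :=
    (Equiv.summable_iff (splitEquiv k).symm).mpr hS
  have hnn : 0 ≤ (fun p : ({j : Fin n // j ≠ k} → ℤ) × ℤ => gfun M x ((splitEquiv k).symm p)) := by
    intro p; exact (exp_pos _).le
  have := ((summable_prod_of_nonneg hnn).mp hsum2).2
  refine this.congr (fun ω' => ?_)
  rw [← tsum_mul_right]
  refine tsum_congr fun t => ?_
  rw [splitEquiv_symm_apply]
  exact gfun_split M k hcol t ω'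

lemma step_le {n : ℕ} {x : ℝ} (hx : 0 < x) (M M' : Matrix (Fin n) (Fin n) ℝ) (k : Fin n)
    (hd : 0 < M k k) (hcol : ∀ i, i ≠ k → M i k = 0)
    (hM'k : ∀ j, M' k j = if j = k then M k k else 0)
    (hM'r : ∀ i, i ≠ k → ∀ j, M' i j = M i j)
    (hS : Summable (gfun M x)) (hS' : Summable (gfun M' x)) :
    psi M x ≤ psi M' x := by
  classical
  have hcol' : ∀ i, i ≠ k → M' i k = 0 := fun i hi => (hM'r i hi k).trans (hcol i hi)
  have hd' : M' k k = M k k := by rw [hM'k]; simp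
  have hu : ∀ (ω' : {j : Fin n // j ≠ k} → ℤ) (i : Fin n), i ≠ k →
      M'.mulVec (wv k ω') i = M.mulVec (wv k ω') i := by
    intro ω' i hi
    unfold Matrix.mulVec dotProduct
    exact Finset.sum_congr rfl fun j _ => by simp only [hM'r i hi]
  have hc' : ∀ ω' : {j : Fin n // j ≠ k} → ℤ, M'.mulVec (wv k ω') k = 0 := by
    intro ω'
    unfold Matrix.mulVec dotProduct
    rw [Finset.sum_eq_single k]
    · simp [wv]
    · intro j _ hj
      simp only [hM'k, if_neg hj, zero_mul]
    · intro h; exact absurd (Finset.mem_univ k) h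
  have hR : ∀ ω' : {j : Fin n // j ≠ k} → ℤ,
      (∑ i ∈ Finset.univ.erase k, (M'.mulVec (wv k ω') i) ^ 2)
        = ∑ i ∈ Finset.univ.erase k, (M.mulVec (wv k ω') i) ^ 2 := by
    intro ω'
    exact Finset.sum_congr rfl fun i hi => by rw [hu ω' i (Finset.ne_of_mem_erase hi)]
  rw [psi_decomp M k hcol hS, psi_decomp M' k hcol' hS']
  apply (psi_decomp_summable M k hcol hS).tsum_le_tsum _ (psi_decomp_summable M' k hcol' hS')
  intro ω'
  rw [hR ω', hd', hc']
  apply mul_le_mul_of_nonneg_right _ (exp_pos _).le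
  have h1 := gauss_sum_le hx hd (M.mulVec (wv k ω') k)
  calc ∑' t : ℤ, rexp (-x * (M k k * t + M.mulVec (wv k ω') k) ^ 2)
      ≤ ∑' t : ℤ, rexp (-x * (M k k * t) ^ 2) := h1
    _ = ∑' t : ℤ, rexp (-x * (M k k * t + 0) ^ 2) := by
        apply tsum_congr; intro t; rw [add_zero]

lemma step_lt {n : ℕ} {x : ℝ} (hx : 0 < x) (M M' : Matrix (Fin n) (Fin n) ℝ) (k : Fin n)
    (hd : 0 < M k k) (hcol : ∀ i, i ≠ k → M i k = 0)
    (hM'k : ∀ j, M' k j = if j = k then M k k else 0)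
    (hM'r : ∀ i, i ≠ k → ∀ j, M' i j = M i j)
    (hS : Summable (gfun M x)) (hS' : Summable (gfun M' x))
    (hwit : ∃ j, j ≠ k ∧ ¬∃ m : ℤ, M k j = M k k * m) :
    psi M x < psi M' x := by
  classical
  obtain ⟨j0, hj0k, hj0⟩ := hwit
  have hcol' : ∀ i, i ≠ k → M' i k = 0 := fun i hi => (hM'r i hi k).trans (hcol i hi)
  have hd' : M' k k = M k k := by rw [hM'k]; simp
  have hu : ∀ (ω' : {j : Fin n // j ≠ k} → ℤ) (i : Fin n), i ≠ k →
      M'.mulVec (wv k ω') i = M.mulVec (wv k ω') i := by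
    intro ω' i hi
    unfold Matrix.mulVec dotProduct
    exact Finset.sum_congr rfl fun j _ => by simp only [hM'r i hi]
  have hc' : ∀ ω' : {j : Fin n // j ≠ k} → ℤ, M'.mulVec (wv k ω') k = 0 := by
    intro ω'
    unfold Matrix.mulVec dotProduct
    rw [Finset.sum_eq_single k]
    · simp [wv]
    · intro j _ hj
      simp only [hM'k, if_neg hj, zero_mul]
    · intro h; exact absurd (Finset.mem_univ k) h
  have hR : ∀ ω' : {j : Fin n // j ≠ k} → ℤ,
      (∑ i ∈ Finset.univ.erase k, (M'.mulVec (wv k ω') i) ^ 2)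
        = ∑ i ∈ Finset.univ.erase k, (M.mulVec (wv k ω') i) ^ 2 := by
    intro ω'
    exact Finset.sum_congr rfl fun i hi => by rw [hu ω' i (Finset.ne_of_mem_erase hi)]
  rw [psi_decomp M k hcol hS, psi_decomp M' k hcol' hS']
  set ω'₀ : {j : Fin n // j ≠ k} → ℤ := fun j => if (j : Fin n) = j0 then 1 else 0 with hω'₀
  have hwv : wv k ω'₀ = Pi.single j0 (1:ℝ) := by
    funext j
    by_cases h : j = k
    · subst h
      rw [Pi.single_apply, if_neg (Ne.symm hj0k)]
      simp [wv]
    · simp only [wv, dif_neg h, hω'₀, Pi.single_apply]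
      by_cases h2 : j = j0 <;> simp [h2]
  have hcval : M.mulVec (wv k ω'₀) k = M k j0 := by
    rw [hwv, Matrix.mulVec_single]
    simp
  apply Summable.tsum_lt_tsum (i := ω'₀) _ _
    (psi_decomp_summable M k hcol hS) (psi_decomp_summable M' k hcol' hS')
  · intro ω'
    dsimp only
    rw [hR ω', hd', hc']
    apply mul_le_mul_of_nonneg_right _ (exp_pos _).le
    calc ∑' t : ℤ, rexp (-x * (M k k * t + M.mulVec (wv k ω') k) ^ 2)
        ≤ ∑' t : ℤ, rexp (-x * (M k k * t) ^ 2) := gauss_sum_le hx hd _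
      _ = ∑' t : ℤ, rexp (-x * (M k k * t + 0) ^ 2) := by
          apply tsum_congr; intro t; rw [add_zero]
  · rw [hR ω'₀, hd', hc']
    apply mul_lt_mul_of_pos_right _ (exp_pos _)
    rw [hcval]
    calc ∑' t : ℤ, rexp (-x * (M k k * t + M k j0) ^ 2)
        < ∑' t : ℤ, rexp (-x * (M k k * t) ^ 2) := gauss_sum_lt hx hd hj0
      _ = ∑' t : ℤ, rexp (-x * (M k k * t + 0) ^ 2) := by
          apply tsum_congr; intro t; rw [add_zero]

lemma cast_mulVec {n : ℕ} (V : Matrix (Fin n) (Fin n) ℤ) (ω : Fin n → ℤ) :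
    (V.map (Int.cast : ℤ → ℝ)).mulVec (fun j => ((ω j : ℤ) : ℝ))
      = fun i => ((V.mulVec ω i : ℤ) : ℝ) := by
  funext i
  simp only [Matrix.mulVec, dotProduct, Matrix.map_apply]
  push_cast
  rfl

lemma lattice_eq_of_integral {n : ℕ} (a : Fin n → ℝ) (ha : ∀ i, 0 < a i)
    (Ms : Matrix (Fin n) (Fin n) ℝ)
    (htri : Ms.BlockTriangular (id : Fin n → Fin n))
    (hdiag : ∀ i, Ms i i = a i)
    (hall : ∀ i j, ∃ m : ℤ, Ms i j = a i * m) :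
    latticeSet Ms = latticeSet (Matrix.diagonal a) := by
  classical
  choose U hU using hall
  let Um : Matrix (Fin n) (Fin n) ℤ := Matrix.of U
  have hUm : ∀ i j, Um i j = U i j := fun i j => rfl
  have hUtri : Um.BlockTriangular (id : Fin n → Fin n) := by
    intro i j hij
    have h0 : Ms i j = 0 := htri hij
    have := hU i j
    rw [h0] at this
    have : (U i j : ℝ) = 0 := by
      rcases mul_eq_zero.mp this.symm with h | h
      · exact absurd h (ha i).ne'
      · exact h
    exact_mod_cast this
  have hUdiag : ∀ i, Um i i = 1 := by
    intro i
    have := hU i i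
    rw [hdiag i] at this
    have h1 : (1 : ℝ) = (U i i : ℝ) :=
      mul_left_cancel₀ (ha i).ne' (by rw [mul_one]; exact this)
    exact_mod_cast h1.symm
  have hdet : IsUnit Um.det := by
    rw [Matrix.det_of_upperTriangular hUtri]
    have : ∏ i, Um i i = 1 := by
      rw [Finset.prod_congr rfl fun i _ => hUdiag i]
      simp
    rw [this]
    exact isUnit_one
  set W : Matrix (Fin n) (Fin n) ℝ := Um.map (Int.cast : ℤ → ℝ) with hW
  have hMsW : Ms = Matrix.diagonal a * W := by
    ext i j
    rw [Matrix.diagonal_mul]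
    exact hU i j
  ext v
  constructor
  · rintro ⟨ω, rfl⟩
    refine ⟨Um.mulVec ω, ?_⟩
    rw [hMsW, ← Matrix.mulVec_mulVec, cast_mulVec]
  · rintro ⟨ω, rfl⟩
    refine ⟨(Um⁻¹).mulVec ω, ?_⟩
    rw [hMsW, ← Matrix.mulVec_mulVec, cast_mulVec, Matrix.mulVec_mulVec,
      Matrix.mul_nonsing_inv Um hdet, Matrix.one_mulVec]

end Aux

/-- Skewing theorem: a skewing of an orthogonal lattice, i.e. a different lattice generated
by an upper triangular matrix with the same (positive) diagonal, has strictly smaller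
psi function everywhere. -/
theorem psi_skewing_lt {n : ℕ} (a : Fin n → ℝ) (ha : ∀ i, 0 < a i)
    (Ms : Matrix (Fin n) (Fin n) ℝ)
    (htri : Ms.BlockTriangular (id : Fin n → Fin n))
    (hdiag : ∀ i, Ms i i = a i)
    (hne : latticeSet Ms ≠ latticeSet (Matrix.diagonal a))
    (x : ℝ) (hx : 0 < x) :
    psi Ms x < psi (Matrix.diagonal a) x := by
  classical
  -- extract a witness of non-integrality
  have hwit : ∃ (k j0 : Fin n), j0 ≠ k ∧ ¬∃ m : ℤ, Ms k j0 = a k * m := by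
    by_contra h
    push_neg at h
    apply hne
    apply lattice_eq_of_integral a ha Ms htri hdiag
    intro i j
    by_cases hij : j = i
    · subst hij
      exact ⟨1, by rw [hdiag]; simp⟩
    · exact h i j hij
  obtain ⟨k, j0, hj0k, hkj0⟩ := hwit
  -- the interpolating chain of matrices
  set N : ℕ → Matrix (Fin n) (Fin n) ℝ :=
    fun m => Matrix.of fun i j => if (i : ℕ) < m then Matrix.diagonal a i j else Ms i j with hN
  have hNapp : ∀ m i j, N m i j = if (i : ℕ) < m then Matrix.diagonal a i j else Ms i j :=
    fun m i j => rfl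
  have hN0 : N 0 = Ms := by
    ext i j; rw [hNapp]; simp
  have hNn : N n = Matrix.diagonal a := by
    ext i j; rw [hNapp]; simp [i.isLt]
  have htriN : ∀ m, (N m).BlockTriangular (id : Fin n → Fin n) := by
    intro m i j hij
    have hne' : i ≠ j := (ne_of_lt (show (j : Fin n) < i from hij)).symm
    rw [hNapp]
    by_cases h : (i : ℕ) < m
    · rw [if_pos h]; exact Matrix.diagonal_apply_ne a hne'
    · rw [if_neg h]; exact htri hij
  have hdiagN : ∀ m i, N m i i = a i := by
    intro m i
    rw [hNapp]
    by_cases h : (i : ℕ) < m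
    · rw [if_pos h]; exact Matrix.diagonal_apply_eq a i
    · rw [if_neg h]; exact hdiag i
  have hdetN : ∀ m, IsUnit (N m).det := by
    intro m
    rw [Matrix.det_of_upperTriangular (htriN m)]
    rw [Finset.prod_congr rfl fun i _ => hdiagN m i]
    exact (Finset.prod_pos (fun i _ => ha i)).ne'.isUnit
  have hsumN : ∀ m, Summable (gfun (N m) x) := fun m => summable_gauss_matrix hx (N m) (hdetN m)
  -- conditions for the step lemmas
  have hdN : ∀ (m : ℕ) (hm : m < n), 0 < N m ⟨m, hm⟩ ⟨m, hm⟩ := by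
    intro m hm; rw [hdiagN]; exact ha _
  have hcolN : ∀ (m : ℕ) (hm : m < n) (i : Fin n), i ≠ ⟨m, hm⟩ → N m i ⟨m, hm⟩ = 0 := by
    intro m hm i hi
    rw [hNapp]
    by_cases h : (i : ℕ) < m
    · rw [if_pos h]
      exact Matrix.diagonal_apply_ne a hi
    · rw [if_neg h]
      have : (⟨m, hm⟩ : Fin n) < i := by
        have h1 : m ≤ (i : ℕ) := Nat.le_of_not_lt h
        have h2 : (i : ℕ) ≠ m := fun hc => hi (Fin.ext hc)
        exact Fin.mk_lt_of_lt_val (by omega) |>.trans_le (le_refl i)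
      exact htri this
  have hM'kN : ∀ (m : ℕ) (hm : m < n) (j : Fin n),
      N (m+1) ⟨m, hm⟩ j = if j = ⟨m, hm⟩ then N m ⟨m, hm⟩ ⟨m, hm⟩ else 0 := by
    intro m hm j
    rw [hNapp, if_pos (by simp), hdiagN]
    rw [Matrix.diagonal_apply]
    by_cases h : j = ⟨m, hm⟩
    · subst h; simp
    · rw [if_neg (fun hc => h hc.symm), if_neg h]
  have hM'rN : ∀ (m : ℕ) (hm : m < n) (i : Fin n), i ≠ ⟨m, hm⟩ → ∀ j,
      N (m+1) i j = N m i j := by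
    intro m hm i hi j
    rw [hNapp, hNapp]
    have hne2 : (i : ℕ) ≠ m := fun hc => hi (Fin.ext hc)
    by_cases h : (i : ℕ) < m
    · rw [if_pos (by omega), if_pos h]
    · rw [if_neg (by omega), if_neg h]
  have hstep : ∀ (m : ℕ), m < n → psi (N m) x ≤ psi (N (m+1)) x := by
    intro m hm
    exact step_le hx (N m) (N (m+1)) ⟨m, hm⟩ (hdN m hm) (hcolN m hm)
      (hM'kN m hm) (hM'rN m hm) (hsumN m) (hsumN (m+1))
  have hmono : ∀ p q : ℕ, p ≤ q → q ≤ n → psi (N p) x ≤ psi (N q) x := by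
    intro p q hpq hqn
    induction q with
    | zero =>
      have : p = 0 := Nat.le_zero.mp hpq
      subst this; exact le_refl _
    | succ q ih =>
      by_cases hp : p = q + 1
      · subst hp; exact le_refl _
      · exact le_trans (ih (by omega) (by omega)) (hstep q (by omega))
  -- strict step at row k
  have hkfin : (⟨(k : ℕ), k.isLt⟩ : Fin n) = k := Fin.eta k k.isLt
  have hlt : psi (N k) x < psi (N ((k : ℕ) + 1)) x := by
    apply step_lt hx (N k) (N ((k:ℕ)+1)) ⟨(k:ℕ), k.isLt⟩ (hdN _ _) (hcolN _ _)
      (hM'kN _ _) (hM'rN _ _) (hsumN _) (hsumN _)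
    refine ⟨j0, by rw [hkfin]; exact hj0k, ?_⟩
    rw [hkfin]
    have h1 : N k k j0 = Ms k j0 := by
      rw [hNapp, if_neg (lt_irrefl _)]
    have h2 : N k k k = a k := hdiagN _ _
    rw [h1, h2]
    exact hkj0
  calc psi Ms x = psi (N 0) x := by rw [hN0]
    _ ≤ psi (N (k : ℕ)) x := hmono 0 k (Nat.zero_le _) (le_of_lt k.isLt)
    _ < psi (N ((k : ℕ) + 1)) x := hlt
    _ ≤ psi (N n) x := hmono _ n k.isLt (le_refl n)
    _ = psi (Matrix.diagonal a) x := by rw [hNn]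
end

section
/- Let Λ_o be the orthogonal lattice generated by a₁e₁, …, aₙeₙ (aᵢ > 0) and Λ_s any lattice generated by an upper triangular matrix with the same diagonal entries. Then for all x > 0, ψ_{Λ_s}(x) ≤ ψ_{Λ_o}(x) = ∏_{i=1}^n ∑_{ω ∈ ℤ} exp(−x ω² aᵢ²). -/
open scoped BigOperators

open Real Complex
open scoped ENNReal NNReal

lemma summable_gauss_shift {t : ℝ} (ht : 0 < t) (c : ℝ) :
    Summable fun n : ℤ => Real.exp (-t * ((n : ℝ) + c) ^ 2) := by
  have hT : 0 < t / π := div_pos ht Real.pi_pos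
  have h := summable_pow_mul_jacobiTheta₂_term_bound (t * |c| / π) hT 0
  refine Summable.of_nonneg_of_le (fun n => (Real.exp_pos _).le) (fun n => ?_) h
  simp only [pow_zero, one_mul]
  rw [Real.exp_le_exp]
  have hπ : (0:ℝ) < π := Real.pi_pos
  have hrw : -π * (t / π * (n:ℝ) ^ 2 - 2 * (t * |c| / π) * |(n:ℝ)|)
      = -t * (n:ℝ) ^ 2 + 2 * t * (|c| * |(n:ℝ)|) := by
    field_simp
    ring
  push_cast
  rw [hrw]
  have h1 : -(c * (n:ℝ)) ≤ |c| * |(n:ℝ)| := by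
    calc -(c * (n:ℝ)) ≤ |c * (n:ℝ)| := neg_le_abs _
    _ = |c| * |(n:ℝ)| := abs_mul _ _
  nlinarith [mul_le_mul_of_nonneg_left h1 ht.le, mul_nonneg ht.le (sq_nonneg c)]

lemma summable_gauss {t : ℝ} (ht : 0 < t) :
    Summable fun n : ℤ => Real.exp (-t * (n : ℝ) ^ 2) := by
  simpa using summable_gauss_shift ht 0

lemma theta_shift_le {X : ℝ} (hX : 0 < X) (c : ℝ) :
    (∑' n : ℤ, Real.exp (-X * ((n : ℝ) + c) ^ 2)) ≤ ∑' n : ℤ, Real.exp (-X * (n : ℝ) ^ 2) := by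
  set r : ℝ := π / X with hr_def
  have hr : 0 < r := div_pos Real.pi_pos hX
  set K : ℝ := r ^ (1/2 : ℝ) with hK_def
  have hK : 0 < K := Real.rpow_pos_of_pos hr _
  have hπ0 : (π : ℂ) ≠ 0 := by exact_mod_cast Real.pi_ne_zero
  have hKc : ((r : ℂ) ^ (1/2 : ℂ)) = (K : ℂ) := by
    rw [hK_def, Complex.ofReal_cpow hr.le]
    norm_num
  have key : ∀ c : ℝ, ((∑' n : ℤ, Real.exp (-X * ((n : ℝ) + c) ^ 2) : ℝ) : ℂ)
      = (K : ℂ) * ∑' n : ℤ, Complex.exp (-π * r * (n:ℂ) ^ 2 + 2 * π * (-Complex.I * c) * (n:ℂ)) := by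
    intro c
    have ha : 0 < (r : ℂ).re := by simpa using hr
    have hF := Complex.tsum_exp_neg_quadratic ha (-Complex.I * c)
    have hterm : ∀ n : ℤ, -(π:ℂ) / r * ((n:ℂ) + Complex.I * (-Complex.I * c)) ^ 2
        = -X * ((n:ℂ) + (c:ℂ)) ^ 2 := by
      intro n
      have hXr : -(π:ℂ) / r = -X := by
        rw [hr_def]
        push_cast
        field_simp
      rw [hXr]
      congr 2
      rw [show Complex.I * (-Complex.I * c) = (-(Complex.I * Complex.I)) * c by ring,
        Complex.I_mul_I]
      ring
    have hcast : ((∑' n : ℤ, Real.exp (-X * ((n : ℝ) + c) ^ 2) : ℝ) : ℂ)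
        = ∑' n : ℤ, Complex.exp (-(π:ℂ) / r * ((n:ℂ) + Complex.I * (-Complex.I * c)) ^ 2) := by
      rw [Complex.ofReal_tsum]
      refine tsum_congr fun n => ?_
      rw [hterm, show -(X:ℂ) * ((n:ℂ) + (c:ℂ)) ^ 2 = ((-X * ((n:ℝ) + c) ^ 2 : ℝ) : ℂ) by
        push_cast; ring, ← Complex.ofReal_exp]
    rw [hcast, hF, hKc, ← mul_assoc (K:ℂ) (1/(K:ℂ)),
      mul_one_div_cancel (show (K:ℂ) ≠ 0 by exact_mod_cast hK.ne'), one_mul]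
  have hnorm : ∀ n : ℤ, ‖Complex.exp (-π * r * (n:ℂ) ^ 2 + 2 * π * (-Complex.I * c) * (n:ℂ))‖
      = Real.exp (-π * r * (n:ℝ) ^ 2) := by
    intro n
    have harg : -(π:ℂ) * r * (n:ℂ) ^ 2 + 2 * π * (-Complex.I * c) * (n:ℂ)
        = ((-π * r * (n:ℝ) ^ 2 : ℝ) : ℂ) + ((-(2 * π * c * n) : ℝ) : ℂ) * Complex.I := by
      push_cast; ring
    rw [Complex.norm_exp, harg]
    congr 1
    rw [Complex.add_re, Complex.ofReal_re, Complex.mul_I_re, Complex.ofReal_im, neg_zero,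
      add_zero]
  have hsummable : Summable fun n : ℤ =>
      ‖Complex.exp (-π * r * (n:ℂ) ^ 2 + 2 * π * (-Complex.I * c) * (n:ℂ))‖ := by
    refine (summable_gauss (mul_pos Real.pi_pos hr)).congr fun n => ?_
    rw [hnorm n]
    congr 1
    ring
  have hzero : (∑' n : ℤ, Real.exp (-X * (n : ℝ) ^ 2))
      = K * ∑' n : ℤ, Real.exp (-π * r * (n:ℝ) ^ 2) := by
    have h0 := key 0
    simp only [Complex.ofReal_zero, mul_zero, zero_mul, add_zero] at h0
    have hcast0 : (∑' n : ℤ, Complex.exp (-π * r * (n:ℂ) ^ 2)) =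
        ((∑' n : ℤ, Real.exp (-π * r * (n:ℝ) ^ 2) : ℝ) : ℂ) := by
      rw [Complex.ofReal_tsum]
      refine tsum_congr fun n => ?_
      rw [show -(π:ℂ) * r * (n:ℂ) ^ 2 = ((-π * r * (n:ℝ) ^ 2 : ℝ) : ℂ) by push_cast; ring,
        ← Complex.ofReal_exp]
    rw [hcast0] at h0
    exact_mod_cast h0
  have hub : (∑' n : ℤ, Real.exp (-X * ((n : ℝ) + c) ^ 2))
      ≤ K * ∑' n : ℤ, Real.exp (-π * r * (n:ℝ) ^ 2) := by
    have h1 : (∑' n : ℤ, Real.exp (-X * ((n : ℝ) + c) ^ 2))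
        = ‖((∑' n : ℤ, Real.exp (-X * ((n : ℝ) + c) ^ 2) : ℝ) : ℂ)‖ := by
      rw [Complex.norm_real, Real.norm_eq_abs,
        _root_.abs_of_nonneg (tsum_nonneg fun n => (Real.exp_pos _).le)]
    rw [h1, key c, norm_mul]
    have h2 : ‖(K : ℂ)‖ = K := by
      rw [Complex.norm_real, Real.norm_eq_abs, _root_.abs_of_pos hK]
    rw [h2]
    refine mul_le_mul_of_nonneg_left ?_ hK.le
    calc ‖∑' n : ℤ, Complex.exp (-π * r * (n:ℂ) ^ 2 + 2 * π * (-Complex.I * c) * (n:ℂ))‖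
        ≤ ∑' n : ℤ, ‖Complex.exp (-π * r * (n:ℂ) ^ 2 + 2 * π * (-Complex.I * c) * (n:ℂ))‖ :=
          norm_tsum_le_tsum_norm hsummable
      _ = ∑' n : ℤ, Real.exp (-π * r * (n:ℝ) ^ 2) := tsum_congr fun n => hnorm n
  rw [hzero]
  exact hub

lemma theta_shift_le' {x A : ℝ} (hx : 0 < x) (hA : 0 < A) (c : ℝ) :
    (∑' m : ℤ, Real.exp (-x * (A * m + c) ^ 2)) ≤ ∑' m : ℤ, Real.exp (-x * (A * m) ^ 2) := by
  have hXA : 0 < x * A ^ 2 := mul_pos hx (pow_pos hA 2)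
  have h1 : ∀ m : ℤ, -x * (A * m + c) ^ 2 = -(x * A ^ 2) * ((m : ℝ) + c / A) ^ 2 := by
    intro m; field_simp
  have h2 : ∀ m : ℤ, -x * (A * m) ^ 2 = -(x * A ^ 2) * (m : ℝ) ^ 2 := by
    intro m; ring
  calc (∑' m : ℤ, Real.exp (-x * (A * m + c) ^ 2))
      = ∑' m : ℤ, Real.exp (-(x * A ^ 2) * ((m : ℝ) + c / A) ^ 2) :=
        tsum_congr fun m => by rw [h1 m]
    _ ≤ ∑' m : ℤ, Real.exp (-(x * A ^ 2) * (m : ℝ) ^ 2) := theta_shift_le hXA _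
    _ = ∑' m : ℤ, Real.exp (-x * (A * m) ^ 2) := tsum_congr fun m => by rw [h2 m]

lemma summable_gauss_shift' {x A : ℝ} (hx : 0 < x) (hA : 0 < A) (c : ℝ) :
    Summable fun m : ℤ => Real.exp (-x * (A * m + c) ^ 2) := by
  have hXA : 0 < x * A ^ 2 := mul_pos hx (pow_pos hA 2)
  refine (summable_gauss_shift hXA (c / A)).congr fun m => ?_
  congr 1
  field_simp

lemma tsum_eq_toReal_tsum_ofReal {α : Type*} (f : α → ℝ) (hf : ∀ a, 0 ≤ f a) :
    ∑' a, f a = (∑' a, ENNReal.ofReal (f a)).toReal := by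
  by_cases h : Summable f
  · rw [← ENNReal.ofReal_tsum_of_nonneg hf h, ENNReal.toReal_ofReal (tsum_nonneg hf)]
  · rw [tsum_eq_zero_of_not_summable h]
    have htop : (∑' a, ENNReal.ofReal (f a)) = ⊤ := by
      by_contra htop
      apply h
      have h1 : (∑' a, ((f a).toNNReal : ℝ≥0∞)) ≠ ⊤ := htop
      have h2 : Summable fun a => (f a).toNNReal := ENNReal.tsum_coe_ne_top_iff_summable.mp h1
      have h3 : Summable fun a => ((f a).toNNReal : ℝ) := NNReal.summable_coe.mpr h2
      exact h3.congr fun a => Real.coe_toNNReal _ (hf a)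
    rw [htop, ENNReal.toReal_top]

lemma shiftE {x A : ℝ} (hx : 0 < x) (hA : 0 < A) (c : ℝ) :
    (∑' m : ℤ, ENNReal.ofReal (Real.exp (-x * (A * m + c) ^ 2)))
      ≤ ∑' m : ℤ, ENNReal.ofReal (Real.exp (-x * (A * m) ^ 2)) := by
  rw [← ENNReal.ofReal_tsum_of_nonneg (fun m => (Real.exp_pos _).le)
      (summable_gauss_shift' hx hA c),
    ← ENNReal.ofReal_tsum_of_nonneg (fun m => (Real.exp_pos _).le)
      (by simpa using summable_gauss_shift' hx hA 0)]
  exact ENNReal.ofReal_le_ofReal (theta_shift_le' hx hA c)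

lemma tsum_pi_prod : ∀ {n : ℕ} (F : Fin n → ℤ → ℝ≥0∞),
    (∑' ω : Fin n → ℤ, ∏ i, F i (ω i)) = ∏ i, ∑' m : ℤ, F i m := by
  intro n
  induction n with
  | zero =>
    intro F
    simp only [Finset.univ_eq_empty, Finset.prod_empty]
    rw [tsum_eq_single (fun i => i.elim0)]
    · intro b hb
      exact absurd (Subsingleton.elim _ _) hb
  | succ n ih =>
    intro F
    rw [← (Fin.consEquiv (fun _ : Fin (n+1) => ℤ)).tsum_eq, ENNReal.tsum_prod']
    have hterm : ∀ (m : ℤ) (ω : Fin n → ℤ),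
        (∏ i, F i ((Fin.consEquiv (fun _ : Fin (n+1) => ℤ)) (m, ω) i))
          = F 0 m * ∏ i, F i.succ (ω i) := by
      intro m ω
      rw [Fin.prod_univ_succ]
      simp [Fin.consEquiv]
    simp only [hterm]
    rw [Fin.prod_univ_succ]
    calc (∑' m : ℤ, ∑' ω : Fin n → ℤ, F 0 m * ∏ i, F i.succ (ω i))
        = ∑' m : ℤ, F 0 m * ∑' ω : Fin n → ℤ, ∏ i, F i.succ (ω i) := by
          refine tsum_congr fun m => ?_
          rw [ENNReal.tsum_mul_left]
      _ = (∑' m : ℤ, F 0 m) * ∑' ω : Fin n → ℤ, ∏ i, F i.succ (ω i) := ENNReal.tsum_mul_right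
      _ = (∑' m : ℤ, F 0 m) * ∏ i, ∑' m : ℤ, F (Fin.succ i) m := by rw [ih]

noncomputable def PsiE {n : ℕ} (M : Matrix (Fin n) (Fin n) ℝ) (x : ℝ) : ℝ≥0∞ :=
  ∑' ω : Fin n → ℤ, ENNReal.ofReal (Real.exp (-x * ∑ i, (M.mulVec (fun j => (ω j : ℝ)) i) ^ 2))

lemma PsiE_step {n : ℕ} {x : ℝ} (hx : 0 < x) (M M' : Matrix (Fin n) (Fin n) ℝ) (κ : Fin n)
    (hpos : 0 < M κ κ)
    (hrow' : ∀ j, M' κ j = if j = κ then M κ κ else 0)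
    (hrows : ∀ i, i ≠ κ → M i = M' i)
    (hcol : ∀ i, i ≠ κ → M i κ = 0) :
    PsiE M x ≤ PsiE M' x := by
  classical
  set E := Equiv.funSplitAt κ ℤ with hE
  have hmv : ∀ (N : Matrix (Fin n) (Fin n) ℝ) (v : Fin n → ℝ) i,
      N.mulVec v i = ∑ j, N i j * v j := fun N v i => by
    simp [Matrix.mulVec, dotProduct]
  have hsum : ∀ (N : Matrix (Fin n) (Fin n) ℝ), PsiE N x
      = ∑' r : {j // j ≠ κ} → ℤ, ∑' m : ℤ, ENNReal.ofReal
          (Real.exp (-x * ∑ i, (N.mulVec (fun j => ((E.symm (m, r)) j : ℝ)) i) ^ 2)) := by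
    intro N
    rw [PsiE, ← E.symm.tsum_eq, ENNReal.tsum_prod', ENNReal.tsum_comm]
  rw [hsum M, hsum M']
  refine ENNReal.tsum_le_tsum fun r => ?_
  set ω : ℤ → Fin n → ℤ := fun m => E.symm (m, r) with hω
  have hωκ : ∀ m, ω m κ = m := by intro m; simp [hω, hE]
  have hωj : ∀ (m : ℤ) (j) (hj : j ≠ κ), ω m j = r ⟨j, hj⟩ := by
    intro m j hj; simp [hω, hE, hj]
  set A : ℝ := M κ κ with hA
  set c : ℝ := ∑ j ∈ Finset.univ.erase κ, M κ j * (ω 0 j : ℝ) with hc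
  -- rows other than κ: equal for M and M' and independent of m
  have hrest : ∀ (m : ℤ) i, i ≠ κ →
      M.mulVec (fun j => (ω m j : ℝ)) i = M'.mulVec (fun j => (ω 0 j : ℝ)) i := by
    intro m i hi
    rw [hmv, hmv]
    refine Finset.sum_congr rfl fun j _ => ?_
    by_cases hj : j = κ
    · subst hj
      rw [hcol i hi, ← hrows i hi, hcol i hi]
      simp
    · rw [hωj m j hj, hωj 0 j hj, hrows i hi]
  have hrest' : ∀ (m : ℤ) i, i ≠ κ →
      M'.mulVec (fun j => (ω m j : ℝ)) i = M'.mulVec (fun j => (ω 0 j : ℝ)) i := by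
    intro m i hi
    rw [hmv, hmv]
    refine Finset.sum_congr rfl fun j _ => ?_
    by_cases hj : j = κ
    · subst hj
      rw [← hrows i hi, hcol i hi]
      simp
    · rw [hωj m j hj, hωj 0 j hj]
  -- row κ
  have hrowM : ∀ m : ℤ, M.mulVec (fun j => (ω m j : ℝ)) κ = A * m + c := by
    intro m
    rw [hmv, ← Finset.add_sum_erase _ _ (Finset.mem_univ κ), hωκ m]
    congr 1
    refine Finset.sum_congr rfl fun j hj => ?_
    have hjκ : j ≠ κ := Finset.ne_of_mem_erase hj
    rw [hωj m j hjκ, hωj 0 j hjκ]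
  have hrowM' : ∀ m : ℤ, M'.mulVec (fun j => (ω m j : ℝ)) κ = A * m := by
    intro m
    rw [hmv]
    have : ∀ j, M' κ j * (ω m j : ℝ) = if j = κ then A * m else 0 := by
      intro j
      rw [hrow' j]
      by_cases hj : j = κ
      · subst hj; simp [hωκ m]
      · simp [hj]
    simp only [this, Finset.sum_ite_eq', Finset.mem_univ, if_true]
  -- the common rest factor
  set S : ℝ := ∑ i ∈ Finset.univ.erase κ, (M'.mulVec (fun j => (ω 0 j : ℝ)) i) ^ 2 with hS
  have hsplitM : ∀ m : ℤ, (∑ i, (M.mulVec (fun j => (ω m j : ℝ)) i) ^ 2)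
      = (A * m + c) ^ 2 + S := by
    intro m
    rw [← Finset.add_sum_erase _ _ (Finset.mem_univ κ), hrowM m]
    congr 1
    refine Finset.sum_congr rfl fun i hi => ?_
    rw [hrest m i (Finset.ne_of_mem_erase hi)]
  have hsplitM' : ∀ m : ℤ, (∑ i, (M'.mulVec (fun j => (ω m j : ℝ)) i) ^ 2)
      = (A * m) ^ 2 + S := by
    intro m
    rw [← Finset.add_sum_erase _ _ (Finset.mem_univ κ), hrowM' m]
    congr 1
    refine Finset.sum_congr rfl fun i hi => ?_
    rw [hrest' m i (Finset.ne_of_mem_erase hi)]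
  have hfac : ∀ (t : ℝ), ENNReal.ofReal (Real.exp (-x * (t + S)))
      = ENNReal.ofReal (Real.exp (-x * S)) * ENNReal.ofReal (Real.exp (-x * t)) := by
    intro t
    rw [← ENNReal.ofReal_mul (Real.exp_pos _).le, ← Real.exp_add]
    congr 2
    ring
  calc (∑' m : ℤ, ENNReal.ofReal
          (Real.exp (-x * ∑ i, (M.mulVec (fun j => ((ω m) j : ℝ)) i) ^ 2)))
      = ∑' m : ℤ, ENNReal.ofReal (Real.exp (-x * S))
          * ENNReal.ofReal (Real.exp (-x * (A * m + c) ^ 2)) := by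
        refine tsum_congr fun m => ?_
        rw [hsplitM m, hfac]
    _ = ENNReal.ofReal (Real.exp (-x * S))
          * ∑' m : ℤ, ENNReal.ofReal (Real.exp (-x * (A * m + c) ^ 2)) :=
        ENNReal.tsum_mul_left
    _ ≤ ENNReal.ofReal (Real.exp (-x * S))
          * ∑' m : ℤ, ENNReal.ofReal (Real.exp (-x * (A * m) ^ 2)) :=
        mul_le_mul_right (shiftE hx hpos c) _
    _ = ∑' m : ℤ, ENNReal.ofReal
          (Real.exp (-x * ∑ i, (M'.mulVec (fun j => ((ω m) j : ℝ)) i) ^ 2)) := by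
        rw [← ENNReal.tsum_mul_left]
        refine tsum_congr fun m => ?_
        rw [hsplitM' m, hfac]



lemma psi_eq_toReal {n : ℕ} (M : Matrix (Fin n) (Fin n) ℝ) (x : ℝ) :
    psi M x = (PsiE M x).toReal :=
  tsum_eq_toReal_tsum_ofReal _ fun _ => (Real.exp_pos _).le

lemma PsiE_diagonal {n : ℕ} (a : Fin n → ℝ) (x : ℝ) :
    PsiE (Matrix.diagonal a) x
      = ∏ i, ∑' m : ℤ, ENNReal.ofReal (Real.exp (-x * (a i * m) ^ 2)) := by
  rw [← tsum_pi_prod fun i m => ENNReal.ofReal (Real.exp (-x * (a i * m) ^ 2)), PsiE]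
  refine tsum_congr fun ω => ?_
  have h1 : ∀ i, (Matrix.diagonal a).mulVec (fun j => (ω j : ℝ)) i = a i * ω i := by
    intro i
    rw [Matrix.mulVec_diagonal]
  have h2 : (-x * ∑ i, ((Matrix.diagonal a).mulVec (fun j => (ω j : ℝ)) i) ^ 2)
      = ∑ i, -x * (a i * ω i) ^ 2 := by
    rw [Finset.mul_sum]
    exact Finset.sum_congr rfl fun i _ => by rw [h1 i]
  rw [h2, Real.exp_sum, ENNReal.ofReal_prod_of_nonneg fun i _ => (Real.exp_pos _).le]

lemma PsiE_mono {n : ℕ} (a : Fin n → ℝ) (ha : ∀ i, 0 < a i)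
    (Ms : Matrix (Fin n) (Fin n) ℝ)
    (htri : Ms.BlockTriangular (id : Fin n → Fin n))
    (hdiag : ∀ i, Ms i i = a i) {x : ℝ} (hx : 0 < x) :
    PsiE Ms x ≤ PsiE (Matrix.diagonal a) x := by
  classical
  set Mk : ℕ → Matrix (Fin n) (Fin n) ℝ :=
    fun k => Matrix.of fun i j => if (i : ℕ) < k then Matrix.diagonal a i j else Ms i j with hMk
  have h0 : Mk 0 = Ms := by
    ext i j; simp [hMk]
  have hn : Mk n = Matrix.diagonal a := by
    ext i j; simp [hMk, i.isLt]
  have hstep : ∀ k, PsiE (Mk k) x ≤ PsiE (Mk (k + 1)) x := by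
    intro k
    by_cases hk : k < n
    · set κ : Fin n := ⟨k, hk⟩ with hκ
      have hκval : (κ : ℕ) = k := rfl
      refine PsiE_step hx (Mk k) (Mk (k + 1)) κ ?_ ?_ ?_ ?_
      · have : Mk k κ κ = a κ := by
          simp [hMk, hκval, hdiag]
        rw [this]; exact ha κ
      · intro j
        have h1 : Mk (k + 1) κ j = Matrix.diagonal a κ j := by
          simp [hMk, hκval]
        have h2 : Mk k κ κ = a κ := by simp [hMk, hκval, hdiag]
        rw [h1, h2, Matrix.diagonal_apply]
        by_cases hj : j = κ
        · subst hj; simp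
        · simp [hj, Ne.symm hj]
      · intro i hi
        funext j
        by_cases hik : (i : ℕ) < k
        · have : (i : ℕ) < k + 1 := Nat.lt_succ_of_lt hik
          simp [hMk, hik, this]
        · have : ¬ (i : ℕ) < k + 1 := by
            intro hcon
            have : (i : ℕ) = k := Nat.le_antisymm (Nat.lt_succ_iff.mp hcon) (Nat.le_of_not_lt hik)
            exact hi (Fin.ext this)
          simp [hMk, hik, this]
      · intro i hi
        by_cases hik : (i : ℕ) < k
        · have hiκ : i ≠ κ := hi
          simp [hMk, hik, Matrix.diagonal_apply_ne _ hiκ]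
        · have hgt : (κ : ℕ) < (i : ℕ) := by
            rcases Nat.lt_or_ge (k : ℕ) (i : ℕ) with h | h
            · exact h
            · exact absurd (Fin.ext (Nat.le_antisymm h (Nat.le_of_not_lt hik) : (i:ℕ) = k)) hi
          have := htri (show (id κ : Fin n) < id i from hgt)
          simp [hMk, hik, this]
    · have : Mk (k + 1) = Mk k := by
        have hle : n ≤ k := Nat.le_of_not_lt hk
        ext i j
        have h1 : (i : ℕ) < k := lt_of_lt_of_le i.isLt hle
        simp [hMk, h1, Nat.lt_succ_of_lt h1]
      rw [this]
  have hchain : ∀ k, PsiE (Mk 0) x ≤ PsiE (Mk k) x := by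
    intro k
    induction k with
    | zero => exact le_refl _
    | succ k ih => exact le_trans ih (hstep k)
  calc PsiE Ms x = PsiE (Mk 0) x := by rw [h0]
    _ ≤ PsiE (Mk n) x := hchain n
    _ = PsiE (Matrix.diagonal a) x := by rw [hn]

/-- Any lattice generated by an upper triangular matrix with the same positive diagonal as an
orthogonal lattice has a psi function bounded by that of the orthogonal lattice, which in turn
factors as a product of one-dimensional theta-type sums. -/
theorem psi_skewing_le_and_orthogonal_product {n : ℕ} (a : Fin n → ℝ) (ha : ∀ i, 0 < a i)
    (Ms : Matrix (Fin n) (Fin n) ℝ)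
    (htri : Ms.BlockTriangular (id : Fin n → Fin n))
    (hdiag : ∀ i, Ms i i = a i)
    (x : ℝ) (hx : 0 < x) :
    psi Ms x ≤ psi (Matrix.diagonal a) x ∧
    psi (Matrix.diagonal a) x = ∏ i, ∑' ω : ℤ, Real.exp (-x * (ω : ℝ) ^ 2 * a i ^ 2) := by
  have hsummable : ∀ i : Fin n, Summable fun m : ℤ => Real.exp (-x * (a i * m) ^ 2) := by
    intro i
    refine (summable_gauss (mul_pos hx (pow_pos (ha i) 2))).congr fun m => ?_
    congr 1
    ring
  have hfactor : ∀ i : Fin n, (∑' m : ℤ, ENNReal.ofReal (Real.exp (-x * (a i * m) ^ 2)))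
      = ENNReal.ofReal (∑' m : ℤ, Real.exp (-x * (a i * m) ^ 2)) :=
    fun i => (ENNReal.ofReal_tsum_of_nonneg (fun m => (Real.exp_pos _).le) (hsummable i)).symm
  have hne : PsiE (Matrix.diagonal a) x ≠ ⊤ := by
    rw [PsiE_diagonal]
    refine (ENNReal.prod_lt_top fun i _ => ?_).ne
    rw [hfactor i]
    exact ENNReal.ofReal_lt_top
  constructor
  · rw [psi_eq_toReal, psi_eq_toReal]
    exact ENNReal.toReal_mono hne (PsiE_mono a ha Ms htri hdiag hx)
  · rw [psi_eq_toReal, PsiE_diagonal, ENNReal.toReal_prod]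
    refine Finset.prod_congr rfl fun i _ => ?_
    rw [hfactor i, ENNReal.toReal_ofReal (tsum_nonneg fun m => (Real.exp_pos _).le)]
    refine tsum_congr fun m => ?_
    congr 1
    ring
end

section
/- Let Λ_o ⊂ ℝⁿ be generated by the diagonal matrix M = diag(a₁,…,aₙ) with aᵢ > 0, let k ≥ 1, and let Z be an upper triangular integer matrix with all diagonal entries 2^k that is not itself diagonal-generating the same lattice, i.e., MZℤⁿ ≠ 2^k Λ_o. Then the sublattice Λ generated by MZ satisfies ψ_Λ(x) < ψ_{2^k Λ_o}(x) for all x > 0. -/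
open scoped BigOperators

open Real

namespace PsiAux

noncomputable def gfun {n : ℕ} (c : Fin n → ℝ) (Z : Matrix (Fin n) (Fin n) ℤ)
    (ω : Fin n → ℤ) : ℝ :=
  Real.exp (-∑ i, c i * ((Z.mulVec ω i : ℤ) : ℝ) ^ 2)

lemma summable_gauss_int {c : ℝ} (hc : 0 < c) :
    Summable fun n : ℤ => Real.exp (-c * (n : ℝ) ^ 2) := by
  apply Summable.of_nat_of_neg
  all_goals
    refine Summable.of_nonneg_of_le (fun n => (Real.exp_pos _).le) (fun n => ?_)
      (summable_geometric_of_lt_one (Real.exp_pos (-c)).le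
        (Real.exp_lt_one_iff.mpr (neg_neg_of_pos hc)))
  · have h1 : (n : ℝ) ≤ (n : ℝ) ^ 2 := by
      have := Nat.le_self_pow (two_ne_zero) n
      exact_mod_cast this
    rw [← Real.exp_nat_mul]
    apply Real.exp_le_exp.mpr
    push_cast
    nlinarith
  · have h1 : (n : ℝ) ≤ (n : ℝ) ^ 2 := by
      have := Nat.le_self_pow (two_ne_zero) n
      exact_mod_cast this
    rw [← Real.exp_nat_mul]
    apply Real.exp_le_exp.mpr
    push_cast
    nlinarith

lemma summable_gauss_shift {γ : ℝ} (hγ : 0 < γ) (d : ℝ) :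
    Summable fun m : ℤ => Real.exp (-γ * ((m : ℝ) + d) ^ 2) := by
  refine Summable.of_nonneg_of_le (fun _ => (Real.exp_pos _).le) (fun m => ?_)
    ((summable_gauss_int (show (0:ℝ) < γ/2 by linarith)).mul_left (Real.exp (γ * d ^ 2)))
  rw [← Real.exp_add]
  apply Real.exp_le_exp.mpr
  nlinarith [mul_nonneg hγ.le (sq_nonneg ((m:ℝ) + 2*d))]


lemma poisson {γ : ℝ} (hγ : 0 < γ) (d : ℝ) :
    ∑' m : ℤ, Real.exp (-γ * ((m : ℝ) + d) ^ 2)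
      = (π / γ) ^ (1/2 : ℝ)
        * ∑' n : ℤ, Real.exp (-(π ^ 2 / γ) * (n : ℝ) ^ 2) * Real.cos (2 * π * d * n) := by
  have hπγ : (0:ℝ) < π / γ := div_pos Real.pi_pos hγ
  set a : ℂ := ((π / γ : ℝ) : ℂ) with ha_def
  have ha : 0 < a.re := by simpa [ha_def] using hπγ
  have key := Complex.tsum_exp_neg_quadratic ha (-Complex.I * d)
  -- simplify RHS of key
  have hπa : -(π : ℂ) / a = -(γ : ℂ) := by
    have hπ : (π:ℂ) ≠ 0 := Complex.ofReal_ne_zero.mpr Real.pi_ne_zero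
    rw [ha_def]
    push_cast
    field_simp
  have hIb : Complex.I * (-Complex.I * (d:ℂ)) = (d:ℂ) := by
    rw [← mul_assoc, mul_neg, Complex.I_mul_I]
    ring
  have hR : ∀ n : ℤ, Complex.exp (-(π:ℂ) / a * ((n:ℂ) + Complex.I * (-Complex.I * d)) ^ 2)
      = ((Real.exp (-γ * ((n:ℝ) + d) ^ 2) : ℝ) : ℂ) := by
    intro n
    rw [hπa, hIb]
    have : ((n:ℂ) + (d:ℂ)) = (((n:ℝ) + d : ℝ) : ℂ) := by push_cast; ring
    rw [this]
    rw [show -(γ:ℂ) * ((((n:ℝ) + d : ℝ)) : ℂ) ^ 2 = (((-γ * ((n:ℝ)+d)^2 : ℝ)) : ℂ) by push_cast; ring]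
    exact (Complex.ofReal_exp _).symm
  -- simplify LHS of key
  set u : ℤ → ℝ := fun n => Real.exp (-(π ^ 2 / γ) * (n:ℝ) ^ 2) * Real.cos (2 * π * d * n) with hu_def
  set v : ℤ → ℝ := fun n => -(Real.exp (-(π ^ 2 / γ) * (n:ℝ) ^ 2) * Real.sin (2 * π * d * n)) with hv_def
  have hL : ∀ n : ℤ, Complex.exp (-(π:ℂ) * a * (n:ℂ) ^ 2 + 2 * (π:ℂ) * (-Complex.I * d) * (n:ℂ))
      = ((u n : ℝ) : ℂ) + ((v n : ℝ) : ℂ) * Complex.I := by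
    intro n
    have h1 : -(π:ℂ) * a * (n:ℂ) ^ 2 = ((-(π^2/γ) * (n:ℝ)^2 : ℝ) : ℂ) := by
      rw [ha_def]; push_cast; ring
    have h2 : 2 * (π:ℂ) * (-Complex.I * d) * (n:ℂ) = ((-(2*π*d*n) : ℝ) : ℂ) * Complex.I := by
      push_cast; ring
    rw [h1, h2, Complex.exp_add, Complex.exp_mul_I, ← Complex.ofReal_cos,
      ← Complex.ofReal_sin, Real.cos_neg, Real.sin_neg, ← Complex.ofReal_exp]
    simp only [hu_def, hv_def]
    push_cast
    ring
  -- summability of u and v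
  have hgauss := summable_gauss_int (show (0:ℝ) < π^2/γ by positivity)
  have hu : Summable u := by
    refine Summable.of_norm_bounded hgauss (fun n => ?_)
    rw [hu_def]
    simp only [norm_mul, Real.norm_eq_abs, Real.abs_exp]
    calc Real.exp (-(π^2/γ) * (n:ℝ)^2) * |Real.cos (2*π*d*n)|
        ≤ Real.exp (-(π^2/γ) * (n:ℝ)^2) * 1 := by
          apply mul_le_mul_of_nonneg_left (abs_cos_le_one _) (Real.exp_pos _).le
      _ = Real.exp (-(π^2/γ) * (n:ℝ)^2) := mul_one _
  have hv : Summable v := by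
    refine Summable.of_norm_bounded hgauss (fun n => ?_)
    rw [hv_def]
    simp only [norm_neg, norm_mul, Real.norm_eq_abs, Real.abs_exp]
    calc Real.exp (-(π^2/γ) * (n:ℝ)^2) * |Real.sin (2*π*d*n)|
        ≤ Real.exp (-(π^2/γ) * (n:ℝ)^2) * 1 := by
          apply mul_le_mul_of_nonneg_left (abs_sin_le_one _) (Real.exp_pos _).le
      _ = Real.exp (-(π^2/γ) * (n:ℝ)^2) := mul_one _
  have hv0 : ∑' n, v n = 0 := by
    have h1 : ∀ n : ℤ, v (-n) = - v n := by
      intro n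
      simp only [hv_def]
      push_cast
      rw [neg_sq, mul_neg, Real.sin_neg]
      ring
    have h2 := (Equiv.neg ℤ).tsum_eq v
    simp only [Equiv.neg_apply] at h2
    have h3 : ∑' n, v (-n) = ∑' n, -(v n) := tsum_congr h1
    rw [h3, tsum_neg] at h2
    linarith
  -- rewrite key
  rw [tsum_congr hL, tsum_congr hR] at key
  rw [Summable.tsum_add (Complex.summable_ofReal.mpr hu) ((Complex.summable_ofReal.mpr hv).mul_right _),
    tsum_mul_right, ← Complex.ofReal_tsum, ← Complex.ofReal_tsum, hv0] at key
  rw [← Complex.ofReal_tsum] at key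
  -- key : ↑(∑' u) + ↑0 * I = 1 / a^(1/2) * ↑(T d)
  have ha2 : a ^ (1/2 : ℂ) = (((π/γ) ^ (1/2 : ℝ) : ℝ) : ℂ) := by
    rw [ha_def, Complex.ofReal_cpow hπγ.le]
    norm_num
  have hane : a ^ (1/2 : ℂ) ≠ 0 := by
    rw [ha2]
    exact_mod_cast (Real.rpow_pos_of_pos hπγ _).ne'
  have key2 : ((∑' m : ℤ, Real.exp (-γ * ((m:ℝ) + d) ^ 2) : ℝ) : ℂ)
      = (((π/γ) ^ (1/2 : ℝ) : ℝ) : ℂ) * ((∑' n, u n : ℝ) : ℂ) := by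
    rw [← ha2]
    field_simp at key ⊢
    rw [← key]
    push_cast
    ring
  rw [← Complex.ofReal_mul] at key2
  exact_mod_cast key2


lemma poisson_zero {γ : ℝ} (hγ : 0 < γ) :
    ∑' m : ℤ, Real.exp (-γ * (m : ℝ) ^ 2)
      = (π / γ) ^ (1/2 : ℝ) * ∑' n : ℤ, Real.exp (-(π ^ 2 / γ) * (n : ℝ) ^ 2) := by
  have h := poisson hγ 0
  simp only [add_zero] at h
  rw [h]
  congr 1
  apply tsum_congr
  intro n
  rw [show (2 * π * 0 * (n:ℝ)) = 0 by ring, Real.cos_zero, mul_one]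

lemma summable_gauss_cos {γ : ℝ} (hγ : 0 < γ) (d : ℝ) :
    Summable fun n : ℤ => Real.exp (-(π ^ 2 / γ) * (n : ℝ) ^ 2) * Real.cos (2 * π * d * n) := by
  refine Summable.of_norm_bounded (summable_gauss_int (show (0:ℝ) < π^2/γ by positivity))
    (fun n => ?_)
  simp only [norm_mul, Real.norm_eq_abs, Real.abs_exp]
  calc Real.exp (-(π^2/γ) * (n:ℝ)^2) * |Real.cos (2*π*d*n)|
      ≤ Real.exp (-(π^2/γ) * (n:ℝ)^2) * 1 :=
        mul_le_mul_of_nonneg_left (abs_cos_le_one _) (Real.exp_pos _).le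
    _ = _ := mul_one _

lemma oneD_le {γ : ℝ} (hγ : 0 < γ) (d : ℝ) :
    ∑' m : ℤ, Real.exp (-γ * ((m : ℝ) + d) ^ 2) ≤ ∑' m : ℤ, Real.exp (-γ * (m : ℝ) ^ 2) := by
  rw [poisson hγ d, poisson_zero hγ]
  have hr : (0:ℝ) ≤ (π / γ) ^ (1/2 : ℝ) :=
    (Real.rpow_pos_of_pos (div_pos Real.pi_pos hγ) _).le
  apply mul_le_mul_of_nonneg_left _ hr
  apply Summable.tsum_le_tsum _ (summable_gauss_cos hγ d)
    (summable_gauss_int (show (0:ℝ) < π^2/γ by positivity))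
  intro n
  calc Real.exp (-(π^2/γ) * (n:ℝ)^2) * Real.cos (2*π*d*n)
      ≤ Real.exp (-(π^2/γ) * (n:ℝ)^2) * 1 :=
        mul_le_mul_of_nonneg_left (Real.cos_le_one _) (Real.exp_pos _).le
    _ = _ := mul_one _

lemma oneD_lt {γ : ℝ} (hγ : 0 < γ) {d : ℝ} (hd : ∀ z : ℤ, d ≠ z) :
    ∑' m : ℤ, Real.exp (-γ * ((m : ℝ) + d) ^ 2) < ∑' m : ℤ, Real.exp (-γ * (m : ℝ) ^ 2) := by
  rw [poisson hγ d, poisson_zero hγ]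
  have hr : (0:ℝ) < (π / γ) ^ (1/2 : ℝ) :=
    Real.rpow_pos_of_pos (div_pos Real.pi_pos hγ) _
  apply mul_lt_mul_of_pos_left _ hr
  have hcos : Real.cos (2 * π * d * (1:ℤ)) < 1 := by
    rcases lt_or_eq_of_le (Real.cos_le_one (2 * π * d * (1:ℤ))) with h | h
    · exact h
    · exfalso
      obtain ⟨z, hz⟩ := (Real.cos_eq_one_iff _).mp h
      apply hd z
      have hπ : (0:ℝ) < π := Real.pi_pos
      push_cast at hz
      nlinarith [hz]
  refine Summable.tsum_lt_tsum (i := (1:ℤ)) (fun n => ?_) ?_ (summable_gauss_cos hγ d)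
    (summable_gauss_int (show (0:ℝ) < π^2/γ by positivity))
  · calc Real.exp (-(π^2/γ) * (n:ℝ)^2) * Real.cos (2*π*d*n)
        ≤ Real.exp (-(π^2/γ) * (n:ℝ)^2) * 1 :=
          mul_le_mul_of_nonneg_left (Real.cos_le_one _) (Real.exp_pos _).le
      _ = _ := mul_one _
  · calc Real.exp (-(π^2/γ) * ((1:ℤ):ℝ)^2) * Real.cos (2*π*d*(1:ℤ))
        < Real.exp (-(π^2/γ) * ((1:ℤ):ℝ)^2) * 1 :=
          mul_lt_mul_of_pos_left hcos (Real.exp_pos _)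
      _ = _ := mul_one _


lemma gfun_pos {n : ℕ} (c : Fin n → ℝ) (Z : Matrix (Fin n) (Fin n) ℤ) (ω : Fin n → ℤ) :
    0 < gfun c Z ω := Real.exp_pos _

lemma blockTriangular_smul_one {n : ℕ} (L : ℤ) :
    ((L • (1 : Matrix (Fin n) (Fin n) ℤ))).BlockTriangular (id : Fin n → Fin n) := by
  intro i j h
  have hij : i ≠ j := fun hh => absurd hh.symm (ne_of_lt h)
  simp [Matrix.smul_apply, Matrix.one_apply_ne hij]

lemma diag_smul_one {n : ℕ} (L : ℤ) (i : Fin n) :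
    (L • (1 : Matrix (Fin n) (Fin n) ℤ)) i i = L := by
  simp [Matrix.smul_apply]

theorem main_induction {L : ℤ} (hL : 0 < L) :
    ∀ n (c : Fin n → ℝ), (∀ i, 0 < c i) → ∀ (Z : Matrix (Fin n) (Fin n) ℤ),
      Z.BlockTriangular (id : Fin n → Fin n) → (∀ i, Z i i = L) →
      Summable (gfun c Z) ∧
      (∑' ω, gfun c Z ω ≤ ∑' ω, gfun c (L • 1) ω) ∧
      ((∃ i j, ¬ (L ∣ Z i j)) → ∑' ω, gfun c Z ω < ∑' ω, gfun c (L • 1) ω) := by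
  intro n
  induction n with
  | zero =>
    intro c hc Z htri hdiag
    have h1 : ∀ (W : Matrix (Fin 0) (Fin 0) ℤ) (ω : Fin 0 → ℤ), gfun c W ω = 1 := by
      intro W ω
      simp [gfun]
    refine ⟨Summable.of_finite, ?_, ?_⟩
    · exact le_of_eq (tsum_congr fun ω => (h1 Z ω).trans (h1 _ ω).symm)
    · rintro ⟨i, -, -⟩
      exact i.elim0
  | succ n IH =>
    intro c hc Z htri hdiag
    -- notation
    set c' : Fin n → ℝ := fun i => c i.succ with hc'_def
    have hc' : ∀ i, 0 < c' i := fun i => hc i.succ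
    have hLR : (0:ℝ) < (L:ℝ) := by exact_mod_cast hL
    set γ : ℝ := c 0 * (L:ℝ)^2 with hγ_def
    have hγ : 0 < γ := by
      have := hc 0
      positivity
    set θ : ℝ := ∑' m : ℤ, Real.exp (-γ * (m:ℝ)^2) with hθ_def
    have hθpos : 0 < θ := by
      refine Summable.tsum_pos (summable_gauss_int hγ) (fun m => (Real.exp_pos _).le) 0 (Real.exp_pos _)
    -- the one-dimensional partial sums
    have hterm : ∀ (b0 : ℤ), (fun m : ℤ => Real.exp (-(c 0) * ((L * m + b0 : ℤ):ℝ)^2))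
        = fun m : ℤ => Real.exp (-γ * ((m:ℝ) + (b0:ℝ)/(L:ℝ))^2) := by
      intro b0
      funext m
      congr 1
      have h1 : ((L * m + b0 : ℤ):ℝ) = (L:ℝ) * ((m:ℝ) + (b0:ℝ)/(L:ℝ)) := by
        push_cast
        field_simp
      rw [h1, hγ_def]
      ring
    have hτs : ∀ b0 : ℤ, Summable (fun m : ℤ => Real.exp (-(c 0) * ((L * m + b0 : ℤ):ℝ)^2)) := by
      intro b0
      rw [hterm b0]
      exact summable_gauss_shift (by positivity) _
    have hτle : ∀ b0 : ℤ,
        (∑' m : ℤ, Real.exp (-(c 0) * ((L * m + b0 : ℤ):ℝ)^2)) ≤ θ := by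
      intro b0
      rw [hterm b0, hθ_def]
      exact oneD_le hγ _
    have hτlt : ∀ b0 : ℤ, ¬ (L ∣ b0) →
        (∑' m : ℤ, Real.exp (-(c 0) * ((L * m + b0 : ℤ):ℝ)^2)) < θ := by
      intro b0 hb0
      rw [hterm b0, hθ_def]
      refine oneD_lt hγ (fun z hz => hb0 ⟨z, ?_⟩)
      have : (b0:ℝ) = (L:ℝ) * (z:ℝ) := by
        field_simp at hz
        linarith [hz]
      exact_mod_cast this
    have hτnn : ∀ b0 : ℤ, 0 ≤ ∑' m : ℤ, Real.exp (-(c 0) * ((L * m + b0 : ℤ):ℝ)^2) :=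
      fun b0 => tsum_nonneg fun m => (Real.exp_pos _).le
    -- decomposition of an (n+1)-dimensional sum
    have decomp : ∀ (W : Matrix (Fin (n+1)) (Fin (n+1)) ℤ),
        W.BlockTriangular (id : Fin (n+1) → Fin (n+1)) → (∀ i, W i i = L) →
        Summable (gfun c W) ∧
        Summable (fun ω' : Fin n → ℤ => gfun c' (W.submatrix Fin.succ Fin.succ) ω'
          * ∑' m : ℤ, Real.exp (-(c 0) * ((L * m + ∑ j, W 0 j.succ * ω' j : ℤ):ℝ)^2)) ∧
        ∑' ω, gfun c W ω = ∑' ω' : Fin n → ℤ, gfun c' (W.submatrix Fin.succ Fin.succ) ω'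
          * ∑' m : ℤ, Real.exp (-(c 0) * ((L * m + ∑ j, W 0 j.succ * ω' j : ℤ):ℝ)^2) := by
      intro W htriW hdiagW
      set W' := W.submatrix (Fin.succ : Fin n → Fin (n+1)) Fin.succ with hW'_def
      have htriW' : W'.BlockTriangular (id : Fin n → Fin n) := by
        intro i j h
        exact htriW (by simpa using Fin.succ_lt_succ_iff.mpr h)
      have hdiagW' : ∀ i, W' i i = L := fun i => hdiagW i.succ
      obtain ⟨hSW', -, -⟩ := IH c' hc' W' htriW' hdiagW'
      set b : (Fin n → ℤ) → ℤ := fun ω' => ∑ j, W 0 j.succ * ω' j with hb_def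
      have hsplit : ∀ (m : ℤ) (ω' : Fin n → ℤ),
          gfun c W (Fin.cons m ω')
            = Real.exp (-(c 0) * ((L * m + b ω' : ℤ):ℝ)^2) * gfun c' W' ω' := by
        intro m ω'
        rw [gfun, gfun, ← Real.exp_add]
        congr 1
        have h0 : W.mulVec (Fin.cons m ω') 0 = L * m + b ω' := by
          simp only [Matrix.mulVec, dotProduct, hb_def]
          rw [Fin.sum_univ_succ]
          simp only [Fin.cons_zero, Fin.cons_succ, hdiagW 0]
        have hsucc : ∀ i : Fin n, W.mulVec (Fin.cons m ω') i.succ = W'.mulVec ω' i := by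
          intro i
          simp only [Matrix.mulVec, dotProduct, hW'_def, Matrix.submatrix_apply]
          rw [Fin.sum_univ_succ]
          simp only [Fin.cons_zero, Fin.cons_succ,
            htriW (show (id : Fin (n+1) → Fin (n+1)) 0 < id i.succ from i.succ_pos)]
          ring
        rw [Fin.sum_univ_succ]
        rw [h0]
        have : ∀ i : Fin n, c i.succ * ((W.mulVec (Fin.cons m ω') i.succ : ℤ):ℝ)^2
            = c' i * ((W'.mulVec ω' i : ℤ):ℝ)^2 := by
          intro i
          rw [hsucc i, hc'_def]
        rw [Finset.sum_congr rfl (fun i _ => this i)]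
        ring
      -- the product equivalence
      have hprod : Summable (fun p : (Fin n → ℤ) × ℤ => gfun c W (Fin.cons p.2 p.1)) := by
        rw [summable_prod_of_nonneg (fun p => (gfun_pos c W _).le)]
        constructor
        · intro ω'
          simp only [hsplit]
          exact (hτs (b ω')).mul_right _
        · refine Summable.of_nonneg_of_le
            (fun ω' => tsum_nonneg fun m => (gfun_pos c W _).le) (fun ω' => ?_)
            (hSW'.mul_left θ)
          have h1 : ∑' m : ℤ, gfun c W (Fin.cons m ω')
              = (∑' m : ℤ, Real.exp (-(c 0) * ((L * m + b ω' : ℤ):ℝ)^2)) * gfun c' W' ω' := by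
            rw [tsum_congr (fun m => hsplit m ω'), tsum_mul_right]
          rw [h1]
          calc (∑' m : ℤ, Real.exp (-(c 0) * ((L * m + b ω' : ℤ):ℝ)^2)) * gfun c' W' ω'
              ≤ θ * gfun c' W' ω' :=
                mul_le_mul_of_nonneg_right (hτle _) (gfun_pos c' W' ω').le
            _ = θ * gfun c' W' ω' := rfl
      have hSsum2 : Summable (fun ω' : Fin n → ℤ => gfun c' W' ω'
          * ∑' m : ℤ, Real.exp (-(c 0) * ((L * m + b ω' : ℤ):ℝ)^2)) := by
        refine Summable.of_nonneg_of_le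
          (fun ω' => mul_nonneg (gfun_pos c' W' ω').le (hτnn _)) (fun ω' => ?_)
          (hSW'.mul_right θ)
        exact mul_le_mul_of_nonneg_left (hτle _) (gfun_pos c' W' ω').le
      set e : ((Fin n → ℤ) × ℤ) ≃ (Fin (n+1) → ℤ) :=
        (Equiv.prodComm (Fin n → ℤ) ℤ).trans (Fin.consEquiv fun _ => ℤ) with he_def
      have hcomp : (fun p : (Fin n → ℤ) × ℤ => gfun c W (Fin.cons p.2 p.1))
          = (gfun c W) ∘ e := rfl
      have hSW : Summable (gfun c W) := by
        rw [← e.summable_iff]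
        rw [← hcomp]
        exact hprod
      refine ⟨hSW, hSsum2, ?_⟩
      rw [← e.tsum_eq (gfun c W)]
      have : ∀ p : (Fin n → ℤ) × ℤ, gfun c W (e p) = gfun c W (Fin.cons p.2 p.1) := fun p => rfl
      rw [tsum_congr this]
      rw [Summable.tsum_prod' hprod (fun ω' => by
        simp only [hsplit]; exact (hτs (b ω')).mul_right _)]
      apply tsum_congr
      intro ω'
      rw [tsum_congr (fun m => hsplit m ω'), tsum_mul_right, mul_comm]
    -- apply decomposition to Z and to L • 1
    obtain ⟨hSZ, hS2Z, heqZ⟩ := decomp Z htri hdiag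
    obtain ⟨hSO, hS2O, heqO⟩ := decomp (L • 1) (blockTriangular_smul_one L) (diag_smul_one L)
    have htri' : (Z.submatrix (Fin.succ : Fin n → Fin (n+1)) Fin.succ).BlockTriangular
        (id : Fin n → Fin n) := by
      intro i j h
      exact htri (by simpa using Fin.succ_lt_succ_iff.mpr h)
    have hdiag' : ∀ i, (Z.submatrix (Fin.succ : Fin n → Fin (n+1)) Fin.succ) i i = L :=
      fun i => hdiag i.succ
    obtain ⟨hSZ', hleZ', hltZ'⟩ := IH c' hc'
      (Z.submatrix (Fin.succ : Fin n → Fin (n+1)) Fin.succ) htri' hdiag'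
    obtain ⟨hSO', -, -⟩ := IH c' hc' (L • 1) (blockTriangular_smul_one L) (diag_smul_one L)
    -- simplify the L • 1 side
    have hsub1 : (L • (1 : Matrix (Fin (n+1)) (Fin (n+1)) ℤ)).submatrix
        (Fin.succ : Fin n → Fin (n+1)) Fin.succ = (L • 1 : Matrix (Fin n) (Fin n) ℤ) := by
      ext i j
      simp only [Matrix.submatrix_apply, Matrix.smul_apply, Matrix.one_apply, Fin.succ_inj]
    have hb1 : ∀ ω' : Fin n → ℤ,
        (∑ j : Fin n, (L • (1 : Matrix (Fin (n+1)) (Fin (n+1)) ℤ)) 0 j.succ * ω' j) = 0 := by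
      intro ω'
      apply Finset.sum_eq_zero
      intro j _
      have : (0 : Fin (n+1)) ≠ j.succ := (Fin.succ_ne_zero j).symm
      simp [Matrix.smul_apply, Matrix.one_apply_ne this]
    have hτ0 : (∑' m : ℤ, Real.exp (-(c 0) * ((L * m + (0:ℤ) : ℤ):ℝ)^2)) = θ := by
      rw [hterm 0, hθ_def]
      apply tsum_congr
      intro m
      norm_num
    have heqO2 : ∑' ω, gfun c (L • 1) ω
        = (∑' ω' : Fin n → ℤ, gfun c' (L • 1) ω') * θ := by
      rw [heqO, ← tsum_mul_right]
      apply tsum_congr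
      intro ω'
      rw [hsub1, hb1 ω', hτ0]
    -- common chain pieces
    have hchain1 : ∑' ω' : Fin n → ℤ,
          gfun c' (Z.submatrix (Fin.succ : Fin n → Fin (n+1)) Fin.succ) ω'
            * ∑' m : ℤ, Real.exp (-(c 0) * ((L * m + ∑ j, Z 0 j.succ * ω' j : ℤ):ℝ)^2)
        ≤ ∑' ω' : Fin n → ℤ,
            gfun c' (Z.submatrix (Fin.succ : Fin n → Fin (n+1)) Fin.succ) ω' * θ :=
      Summable.tsum_le_tsum (fun ω' => mul_le_mul_of_nonneg_left (hτle _) (gfun_pos _ _ _).le)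
        hS2Z (hSZ'.mul_right θ)
    have hmulZ : ∑' ω' : Fin n → ℤ,
          gfun c' (Z.submatrix (Fin.succ : Fin n → Fin (n+1)) Fin.succ) ω' * θ
        = (∑' ω' : Fin n → ℤ,
            gfun c' (Z.submatrix (Fin.succ : Fin n → Fin (n+1)) Fin.succ) ω') * θ :=
      tsum_mul_right
    have hle : ∑' ω, gfun c Z ω ≤ ∑' ω, gfun c (L • 1) ω := by
      rw [heqZ, heqO2]
      calc ∑' ω' : Fin n → ℤ,
            gfun c' (Z.submatrix (Fin.succ : Fin n → Fin (n+1)) Fin.succ) ω'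
              * ∑' m : ℤ, Real.exp (-(c 0) * ((L * m + ∑ j, Z 0 j.succ * ω' j : ℤ):ℝ)^2)
          ≤ ∑' ω' : Fin n → ℤ,
              gfun c' (Z.submatrix (Fin.succ : Fin n → Fin (n+1)) Fin.succ) ω' * θ := hchain1
        _ = (∑' ω' : Fin n → ℤ,
              gfun c' (Z.submatrix (Fin.succ : Fin n → Fin (n+1)) Fin.succ) ω') * θ := hmulZ
        _ ≤ (∑' ω' : Fin n → ℤ, gfun c' (L • 1) ω') * θ :=
            mul_le_mul_of_nonneg_right hleZ' hθpos.le
    refine ⟨hSZ, hle, ?_⟩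
    rintro ⟨i, j, hij⟩
    rcases Fin.eq_zero_or_eq_succ i with rfl | ⟨i', rfl⟩
    · -- nontrivial entry in row 0
      have hj : j ≠ 0 := by
        rintro rfl
        exact hij (hdiag 0 ▸ dvd_refl L)
      obtain ⟨j', rfl⟩ := Fin.eq_succ_of_ne_zero hj
      have hbω0 : (∑ t : Fin n, Z 0 t.succ * (Pi.single j' 1 : Fin n → ℤ) t) = Z 0 j'.succ := by
        rw [Finset.sum_eq_single j']
        · rw [Pi.single_eq_same, mul_one]
        · intro t _ ht
          rw [Pi.single_eq_of_ne ht, mul_zero]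
        · intro h
          exact absurd (Finset.mem_univ j') h
      have hstrict : ∑' ω' : Fin n → ℤ,
            gfun c' (Z.submatrix (Fin.succ : Fin n → Fin (n+1)) Fin.succ) ω'
              * ∑' m : ℤ, Real.exp (-(c 0) * ((L * m + ∑ j, Z 0 j.succ * ω' j : ℤ):ℝ)^2)
          < ∑' ω' : Fin n → ℤ,
              gfun c' (Z.submatrix (Fin.succ : Fin n → Fin (n+1)) Fin.succ) ω' * θ := by
        refine Summable.tsum_lt_tsum (i := (Pi.single j' 1 : Fin n → ℤ))
          (fun ω' => mul_le_mul_of_nonneg_left (hτle _) (gfun_pos _ _ _).le) ?_ hS2Z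
          (hSZ'.mul_right θ)
        apply mul_lt_mul_of_pos_left _ (gfun_pos _ _ _)
        apply hτlt
        rw [hbω0]
        exact hij
      rw [heqZ, heqO2]
      calc ∑' ω' : Fin n → ℤ,
            gfun c' (Z.submatrix (Fin.succ : Fin n → Fin (n+1)) Fin.succ) ω'
              * ∑' m : ℤ, Real.exp (-(c 0) * ((L * m + ∑ j, Z 0 j.succ * ω' j : ℤ):ℝ)^2)
          < ∑' ω' : Fin n → ℤ,
              gfun c' (Z.submatrix (Fin.succ : Fin n → Fin (n+1)) Fin.succ) ω' * θ := hstrict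
        _ = (∑' ω' : Fin n → ℤ,
              gfun c' (Z.submatrix (Fin.succ : Fin n → Fin (n+1)) Fin.succ) ω') * θ := hmulZ
        _ ≤ (∑' ω' : Fin n → ℤ, gfun c' (L • 1) ω') * θ :=
            mul_le_mul_of_nonneg_right hleZ' hθpos.le
    · -- nontrivial entry in a later row
      have hj : j ≠ 0 := by
        rintro rfl
        refine hij ?_
        rw [htri (show (id : Fin (n+1) → Fin (n+1)) 0 < id i'.succ from i'.succ_pos)]
        exact dvd_zero L
      obtain ⟨j', rfl⟩ := Fin.eq_succ_of_ne_zero hj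
      have hZ' : ¬ L ∣ (Z.submatrix (Fin.succ : Fin n → Fin (n+1)) Fin.succ) i' j' := by
        simpa [Matrix.submatrix_apply] using hij
      have hstrict' := hltZ' ⟨i', j', hZ'⟩
      rw [heqZ, heqO2]
      calc ∑' ω' : Fin n → ℤ,
            gfun c' (Z.submatrix (Fin.succ : Fin n → Fin (n+1)) Fin.succ) ω'
              * ∑' m : ℤ, Real.exp (-(c 0) * ((L * m + ∑ j, Z 0 j.succ * ω' j : ℤ):ℝ)^2)
          ≤ ∑' ω' : Fin n → ℤ,
              gfun c' (Z.submatrix (Fin.succ : Fin n → Fin (n+1)) Fin.succ) ω' * θ := hchain1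
        _ = (∑' ω' : Fin n → ℤ,
              gfun c' (Z.submatrix (Fin.succ : Fin n → Fin (n+1)) Fin.succ) ω') * θ := hmulZ
        _ < (∑' ω' : Fin n → ℤ, gfun c' (L • 1) ω') * θ :=
            mul_lt_mul_of_pos_right hstrict' hθpos


/-- If every entry of `Z` is divisible by `L = 2^k`, the two lattices agree. -/
lemma lattice_eq_of_dvd {n : ℕ} (a : Fin n → ℝ) (k : ℕ) (Z : Matrix (Fin n) (Fin n) ℤ)
    (htri : Z.BlockTriangular (id : Fin n → Fin n))
    (hdiag : ∀ i, Z i i = 2 ^ k)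
    (hall : ∀ i j, (2^k : ℤ) ∣ Z i j) :
    latticeSet (Matrix.diagonal a * Z.map (Int.cast : ℤ → ℝ)) =
      latticeSet (Matrix.diagonal fun i => (2 : ℝ) ^ k * a i) := by
  set L : ℤ := 2 ^ k with hL_def
  have hLne : L ≠ 0 := by positivity
  set W : Matrix (Fin n) (Fin n) ℤ := Matrix.of (fun i j => Z i j / L) with hW_def
  have hZW : ∀ i j, Z i j = L * W i j := fun i j => (Int.mul_ediv_cancel' (hall i j)).symm
  have hWdiag : ∀ i, W i i = 1 := by
    intro i
    show Z i i / L = 1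
    rw [hdiag i, Int.ediv_self hLne]
  have hWtri : W.BlockTriangular (id : Fin n → Fin n) := by
    intro i j h
    show Z i j / L = 0
    rw [htri h, Int.zero_ediv]
  have hWdet : W.det = 1 := by
    rw [Matrix.det_of_upperTriangular hWtri]
    simp [hWdiag]
  haveI : Invertible W := W.invertibleOfIsUnitDet (by rw [hWdet]; exact isUnit_one)
  have hWsurj : ∀ v : Fin n → ℤ, ∃ ω : Fin n → ℤ, W.mulVec ω = v := by
    intro v
    refine ⟨(⅟W).mulVec v, ?_⟩
    rw [Matrix.mulVec_mulVec, mul_invOf_self, Matrix.one_mulVec]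
  -- real-side matrices
  have hcastL : ((L : ℤ) : ℝ) = (2:ℝ)^k := by push_cast [hL_def]; ring
  have hMZ : Matrix.diagonal a * Z.map (Int.cast : ℤ → ℝ)
      = Matrix.diagonal (fun i => (2:ℝ)^k * a i) * W.map (Int.cast : ℤ → ℝ) := by
    ext i j
    rw [Matrix.diagonal_mul, Matrix.diagonal_mul]
    simp only [Matrix.map_apply]
    rw [hZW i j]
    push_cast [hL_def]
    ring
  have hWcast : ∀ ω : Fin n → ℤ,
      (W.map (Int.cast : ℤ → ℝ)).mulVec (fun j => (ω j : ℝ))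
        = fun i => ((W.mulVec ω i : ℤ) : ℝ) := by
    intro ω
    funext i
    simp only [Matrix.mulVec, dotProduct, Matrix.map_apply]
    push_cast
    rfl
  ext v
  simp only [latticeSet, Set.mem_setOf_eq]
  constructor
  · rintro ⟨ω, rfl⟩
    refine ⟨W.mulVec ω, ?_⟩
    rw [hMZ, ← Matrix.mulVec_mulVec, hWcast ω]
  · rintro ⟨ω', rfl⟩
    obtain ⟨ω, hω⟩ := hWsurj ω'
    refine ⟨ω, ?_⟩
    rw [hMZ, ← Matrix.mulVec_mulVec, hWcast ω, hω]


end PsiAux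

/-- A skewed sublattice, generated by `M Z` with `Z` an upper triangular integer matrix
with diagonal entries `2^k`, has a strictly smaller psi function than the orthogonal
sublattice `2^k Λ_o`, provided the two lattices differ. -/
theorem psi_skewed_sublattice_lt {n : ℕ} (a : Fin n → ℝ) (ha : ∀ i, 0 < a i)
    (k : ℕ) (hk : 1 ≤ k) (Z : Matrix (Fin n) (Fin n) ℤ)
    (htri : Z.BlockTriangular (id : Fin n → Fin n))
    (hdiag : ∀ i, Z i i = 2 ^ k)
    (hne : latticeSet (Matrix.diagonal a * Z.map (Int.cast : ℤ → ℝ)) ≠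
      latticeSet (Matrix.diagonal fun i => (2 : ℝ) ^ k * a i))
    (x : ℝ) (hx : 0 < x) :
    psi (Matrix.diagonal a * Z.map (Int.cast : ℤ → ℝ)) x <
      psi (Matrix.diagonal fun i => (2 : ℝ) ^ k * a i) x := by
  set L : ℤ := 2 ^ k with hL_def
  have hL : 0 < L := by positivity
  set c : Fin n → ℝ := fun i => x * a i ^ 2 with hc_def
  have hc : ∀ i, 0 < c i := fun i => by
    have := ha i
    positivity
  -- rewrite the left psi
  have hpsiL : psi (Matrix.diagonal a * Z.map (Int.cast : ℤ → ℝ)) x = ∑' ω, PsiAux.gfun c Z ω := by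
    apply tsum_congr
    intro ω
    rw [PsiAux.gfun]
    congr 1
    have hv : ∀ i, (Matrix.diagonal a * Z.map (Int.cast : ℤ → ℝ)).mulVec
        (fun j => (ω j : ℝ)) i = a i * ((Z.mulVec ω i : ℤ) : ℝ) := by
      intro i
      rw [← Matrix.mulVec_mulVec, Matrix.mulVec_diagonal]
      congr 1
      simp only [Matrix.mulVec, dotProduct, Matrix.map_apply]
      push_cast
      rfl
    rw [Finset.sum_congr rfl (fun i _ => by rw [hv i])]
    rw [neg_mul, neg_inj, Finset.mul_sum]
    apply Finset.sum_congr rfl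
    intro i _
    rw [hc_def]
    ring
  -- rewrite the right psi
  have hpsiR : psi (Matrix.diagonal fun i => (2:ℝ)^k * a i) x = ∑' ω, PsiAux.gfun c (L • 1) ω := by
    apply tsum_congr
    intro ω
    rw [PsiAux.gfun]
    congr 1
    have hv : ∀ i, (Matrix.diagonal fun i => (2:ℝ)^k * a i).mulVec
        (fun j => (ω j : ℝ)) i = (2:ℝ)^k * a i * (ω i : ℝ) :=
      fun i => Matrix.mulVec_diagonal _ _ _
    have hv2 : ∀ i, ((L • (1 : Matrix (Fin n) (Fin n) ℤ)).mulVec ω i : ℤ) = L * ω i := by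
      intro i
      rw [Matrix.smul_mulVec, Matrix.one_mulVec]
      simp
    rw [Finset.sum_congr rfl (fun i _ => by rw [hv i])]
    rw [neg_mul, neg_inj, Finset.mul_sum]
    apply Finset.sum_congr rfl
    intro i _
    rw [hc_def, hv2 i]
    push_cast [hL_def]
    ring
  -- the nondivisibility witness
  have hdvd : ∃ i j, ¬ (L ∣ Z i j) := by
    by_contra hcon
    push_neg at hcon
    exact hne (PsiAux.lattice_eq_of_dvd a k Z htri hdiag hcon)
  obtain ⟨-, -, hlt⟩ := PsiAux.main_induction hL n c hc Z htri hdiag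
  rw [hpsiL, hpsiR]
  exact hlt hdvd
end
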